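/- arXiv:2201.04440 — 8 statements merged into one kernel-verified Lean document; each statement's English description precedes it below -/
import Mathlib

section
/- Let E be a finite-dimensional real inner product space, S ⊆ E a nonempty closed convex set, L > 0, and f : E → ℝ a differentiable function whose gradient ∇f satisfies ‖∇f(x) − ∇f(y)‖ ≤ L‖x − y‖ for all x, y ∈ E. Let μ ∈ S, let α > 0, and let v ∈ S be a projection of μ + α∇f(μ) onto S, i.e. ‖v − (μ + α∇f(μ))‖ ≤ ‖w − (μ + α∇f(μ))‖ for all w ∈ S. Then f(v) ≥ f(μ) + (1/(2α) − L/2)·‖v − μ‖². -/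
open scoped RealInnerProductSpace

/-- One projected-gradient ascent step on an `L`-smooth function `f` over a nonempty
closed convex set `S` satisfies `f(v) ≥ f(μ) + (1/(2α) − L/2)‖v − μ‖²`. -/
theorem stmt_0 {E : Type*} [NormedAddCommGroup E] [InnerProductSpace ℝ E]
    [FiniteDimensional ℝ E]
    (S : Set E) (hS_ne : S.Nonempty) (hS_closed : IsClosed S) (hS_conv : Convex ℝ S)
    (L : ℝ) (hL : 0 < L)
    (f : E → ℝ) (hf : Differentiable ℝ f)
    (hlip : ∀ x y : E, ‖gradient f x - gradient f y‖ ≤ L * ‖x - y‖)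
    (μ : E) (hμ : μ ∈ S) (α : ℝ) (hα : 0 < α)
    (v : E) (hv : v ∈ S)
    (hproj : ∀ w ∈ S, ‖v - (μ + α • gradient f μ)‖ ≤ ‖w - (μ + α • gradient f μ)‖) :
    f v ≥ f μ + (1 / (2 * α) - L / 2) * ‖v - μ‖ ^ 2 := by
  set u := μ + α • gradient f μ with hu
  set d := v - μ with hd
  -- Step 1: projection characterization at w = μ
  have hinf : ‖u - v‖ = ⨅ w : S, ‖u - w‖ := by
    haveI : Nonempty S := ⟨⟨v, hv⟩⟩
    have hbdd : BddBelow (Set.range fun w : S => ‖u - (w : E)‖) := by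
      refine ⟨0, ?_⟩; rintro x ⟨w, rfl⟩; positivity
    refine le_antisymm (le_ciInf fun w => ?_) (ciInf_le hbdd (⟨v, hv⟩ : S))
    have := hproj w w.2
    rwa [norm_sub_rev, norm_sub_rev (w : E)] at this
  have hchar := (norm_eq_iInf_iff_real_inner_le_zero hS_conv hv).1 hinf μ hμ
  -- u - v = -d + α • gradient f μ ; μ - v = -d
  have hkey : ‖d‖ ^ 2 ≤ α * ⟪gradient f μ, d⟫ := by
    have h1 : u - v = α • gradient f μ - d := by rw [hu, hd]; abel
    have h2 : μ - v = -d := by rw [hd]; abel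
    rw [h1, h2, inner_neg_right, inner_sub_left, real_inner_smul_left,
      real_inner_self_eq_norm_sq] at hchar
    linarith
  -- Step 2: descent lemma lower bound
  have hdesc : f v ≥ f μ + ⟪gradient f μ, d⟫ - L / 2 * ‖d‖ ^ 2 := by
    set g : ℝ → ℝ := fun t => f (μ + t • d) - t * ⟪gradient f μ, d⟫ + L * t ^ 2 / 2 * ‖d‖ ^ 2
      with hg
    have hder : ∀ t : ℝ, HasDerivAt g
        (⟪gradient f (μ + t • d), d⟫ - ⟪gradient f μ, d⟫ + L * t * ‖d‖ ^ 2) t := by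
      intro t
      have hγ : HasDerivAt (fun t : ℝ => μ + t • d) d t := by
        simpa using ((hasDerivAt_id t).smul_const d).const_add μ
      have hF : HasDerivAt (fun t => f (μ + t • d)) ⟪gradient f (μ + t • d), d⟫ t := by
        have hg' := (hf (μ + t • d)).hasGradientAt
        rw [hasGradientAt_iff_hasFDerivAt] at hg'
        have := hg'.comp_hasDerivAt t hγ
        exact this.congr_deriv (by simp)
      have h2 : HasDerivAt (fun t : ℝ => t * ⟪gradient f μ, d⟫) ⟪gradient f μ, d⟫ t := by
        simpa using (hasDerivAt_id t).mul_const ⟪gradient f μ, d⟫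
      have h3 : HasDerivAt (fun t : ℝ => L * t ^ 2 / 2 * ‖d‖ ^ 2) (L * t * ‖d‖ ^ 2) t := by
        have : HasDerivAt (fun t : ℝ => t ^ 2) (2 * t) t := by
          simpa using hasDerivAt_pow 2 t
        have := ((this.const_mul L).div_const 2).mul_const (‖d‖ ^ 2)
        exact this.congr_deriv (by ring)
      exact (hF.sub h2).add h3
    have hmono : MonotoneOn g (Set.Icc 0 1) := by
      refine monotoneOn_of_deriv_nonneg (convex_Icc 0 1)
        (fun t _ => (hder t).differentiableAt.continuousAt.continuousWithinAt) ?_ ?_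
      · intro t _
        exact (hder t).differentiableAt.differentiableWithinAt
      · intro t ht
        rw [interior_Icc] at ht
        rw [(hder t).deriv]
        have hbd : |⟪gradient f (μ + t • d) - gradient f μ, d⟫| ≤ L * t * ‖d‖ ^ 2 := by
          refine (abs_real_inner_le_norm _ _).trans ?_
          have := hlip (μ + t • d) μ
          simp only [add_sub_cancel_left, norm_smul, Real.norm_eq_abs,
            abs_of_pos ht.1] at this
          calc ‖gradient f (μ + t • d) - gradient f μ‖ * ‖d‖ ≤ L * (t * ‖d‖) * ‖d‖ := by
                exact mul_le_mul_of_nonneg_right this (norm_nonneg d)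
            _ = L * t * ‖d‖ ^ 2 := by ring
        rw [inner_sub_left] at hbd
        have := neg_abs_le (⟪gradient f (μ + t • d), d⟫ - ⟪gradient f μ, d⟫)
        linarith [(abs_le.1 hbd).1]
    have h01 := hmono (Set.mem_Icc.2 ⟨le_refl 0, zero_le_one⟩)
      (Set.mem_Icc.2 ⟨zero_le_one, le_refl 1⟩) zero_le_one
    simp only [hg, zero_smul, add_zero, one_smul, zero_mul, sub_zero, zero_pow, mul_zero,
      zero_div, mul_one, one_pow] at h01
    have hvμ : μ + d = v := by rw [hd]; abel
    rw [hvμ] at h01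
    linarith
  -- Step 3: combine
  have hnn : (0:ℝ) ≤ ‖d‖ ^ 2 := by positivity
  have hc : (0:ℝ) ≤ 1 / (2 * α) := by positivity
  have hαc : α * (1 / (2 * α)) = 1 / 2 := by field_simp
  have hkey' := mul_le_mul_of_nonneg_left hkey hc
  nlinarith [hdesc, hkey', hnn, mul_nonneg hc hnn]
end

section
/- Let E be a finite-dimensional real inner product space, S ⊆ E a nonempty closed convex set, L > 0, and f : E → ℝ a differentiable function with L-Lipschitz gradient. If μ ∈ S, 0 < α < 1/L, and v ∈ S is a projection of μ + α∇f(μ) onto S, then f(v) ≥ f(μ); that is, one projected-gradient ascent step with step size smaller than 1/L does not decrease the objective. -/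
open scoped RealInnerProductSpace

-- descent lemma (lower bound form)
lemma descent_lower {E : Type*} [NormedAddCommGroup E] [InnerProductSpace ℝ E]
    [CompleteSpace E]
    (L : ℝ) (hL : 0 < L) (f : E → ℝ) (hf : Differentiable ℝ f)
    (hlip : ∀ x y : E, ‖gradient f x - gradient f y‖ ≤ L * ‖x - y‖)
    (x y : E) :
    f y ≥ f x + ⟪gradient f x, y - x⟫ - L / 2 * ‖y - x‖ ^ 2 := by
  set u := y - x with hu
  set ψ : ℝ → ℝ := fun t => f (x + t • u) - t * ⟪gradient f x, u⟫ + L * t ^ 2 / 2 * ‖u‖ ^ 2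
    with hψ
  have hc : ∀ t : ℝ, HasDerivAt (fun t : ℝ => x + t • u) u t := by
    intro t
    simpa using ((hasDerivAt_id t).smul_const u).const_add x
  have hd : ∀ t : ℝ, HasDerivAt ψ
      (⟪gradient f (x + t • u), u⟫ - ⟪gradient f x, u⟫ + L * t * ‖u‖ ^ 2) t := by
    intro t
    have h1 : HasDerivAt (fun t : ℝ => f (x + t • u)) ⟪gradient f (x + t • u), u⟫ t := by
      have hg := ((hf (x + t • u)).hasGradientAt).hasFDerivAt
      have := hg.comp_hasDerivAt t (hc t)
      refine this.congr_deriv ?_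
      simp [gradient, InnerProductSpace.toDual_symm_apply]
    have h2 : HasDerivAt (fun t : ℝ => t * ⟪gradient f x, u⟫) ⟪gradient f x, u⟫ t := by
      simpa using (hasDerivAt_id t).mul_const (⟪gradient f x, u⟫)
    have h3 : HasDerivAt (fun t : ℝ => L * t ^ 2 / 2 * ‖u‖ ^ 2) (L * t * ‖u‖ ^ 2) t := by
      have := (((hasDerivAt_pow 2 t).const_mul L).div_const 2).mul_const (‖u‖ ^ 2)
      refine this.congr_deriv ?_
      rw [show (2:ℕ) - 1 = 1 from rfl]; push_cast
      ring
    exact (h1.sub h2).add h3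
  have hmono : MonotoneOn ψ (Set.Icc 0 1) := by
    apply monotoneOn_of_deriv_nonneg (convex_Icc 0 1)
    · exact (Continuous.continuousOn (by
        have := hf.continuous
        fun_prop))
    · intro t ht
      exact ((hd t).differentiableAt).differentiableWithinAt
    · intro t ht
      rw [interior_Icc] at ht
      rw [(hd t).deriv]
      have hip : |⟪gradient f (x + t • u) - gradient f x, u⟫| ≤ L * t * ‖u‖ ^ 2 := by
        calc |⟪gradient f (x + t • u) - gradient f x, u⟫|
            ≤ ‖gradient f (x + t • u) - gradient f x‖ * ‖u‖ := abs_real_inner_le_norm _ _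
          _ ≤ (L * ‖(x + t • u) - x‖) * ‖u‖ := by
              have := hlip (x + t • u) x
              exact mul_le_mul_of_nonneg_right this (norm_nonneg _)
          _ = L * t * ‖u‖ ^ 2 := by
              simp [norm_smul, abs_of_pos ht.1]
              ring
      have := (abs_le.mp hip).1
      rw [inner_sub_left] at this
      linarith
  have := hmono (Set.left_mem_Icc.mpr zero_le_one) (Set.right_mem_Icc.mpr zero_le_one)
    zero_le_one
  simp only [hψ] at this
  simp only [zero_smul, add_zero, one_smul, zero_mul, one_mul, one_pow] at this
  have hy : x + u = y := by rw [hu]; abel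
  rw [hy] at this
  linarith

/-- One projected-gradient ascent step with step size `α < 1/L` on an `L`-smooth function
`f` over a nonempty closed convex set `S` does not decrease the objective. -/
theorem stmt_1 {E : Type*} [NormedAddCommGroup E] [InnerProductSpace ℝ E]
    [FiniteDimensional ℝ E]
    (S : Set E) (hS_ne : S.Nonempty) (hS_closed : IsClosed S) (hS_conv : Convex ℝ S)
    (L : ℝ) (hL : 0 < L)
    (f : E → ℝ) (hf : Differentiable ℝ f)
    (hlip : ∀ x y : E, ‖gradient f x - gradient f y‖ ≤ L * ‖x - y‖)
    (μ : E) (hμ : μ ∈ S) (α : ℝ) (hα0 : 0 < α) (hα1 : α < 1 / L)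
    (v : E) (hv : v ∈ S)
    (hproj : ∀ w ∈ S, ‖v - (μ + α • gradient f μ)‖ ≤ ‖w - (μ + α • gradient f μ)‖) :
    f v ≥ f μ := by
  set g := gradient f μ with hg
  set u := μ + α • g with hu
  -- variational inequality
  haveI : Nonempty S := hS_ne.to_subtype
  have hiInf : ‖u - v‖ = ⨅ w : S, ‖u - w‖ := by
    apply le_antisymm
    · apply le_ciInf
      intro ⟨w, hw⟩
      rw [norm_sub_rev, norm_sub_rev u w]
      exact hproj w hw
    · exact ciInf_le ⟨0, fun r ⟨w, hw⟩ => by simp [← hw]⟩ (⟨v, hv⟩ : S)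
  have hvar := (norm_eq_iInf_iff_real_inner_le_zero hS_conv hv).mp hiInf μ hμ
  -- ⟪u - v, μ - v⟫ ≤ 0, u - v = (μ - v) + α • g
  have key : ‖v - μ‖ ^ 2 ≤ α * ⟪g, v - μ⟫ := by
    have : ⟪(μ - v) + α • g, μ - v⟫ ≤ 0 := by
      have h1 : u - v = (μ - v) + α • g := by rw [hu]; abel
      rwa [h1] at hvar
    rw [inner_add_left, real_inner_self_eq_norm_sq, real_inner_smul_left] at this
    have h2 : ⟪g, μ - v⟫ = -⟪g, v - μ⟫ := by
      rw [← inner_neg_right]; congr 1; abel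
    rw [h2, norm_sub_rev μ v] at this
    nlinarith
  have hdes := descent_lower L hL f hf hlip μ v
  have hLα : L * α < 1 := by
    rw [lt_div_iff₀ hL] at hα1; linarith [hα1]
  have hinner : ⟪g, v - μ⟫ ≥ ‖v - μ‖ ^ 2 / α := by
    rw [ge_iff_le, div_le_iff₀ hα0]
    nlinarith [key]
  have hsq : (0:ℝ) ≤ ‖v - μ‖ ^ 2 := sq_nonneg _
  have hfin : (1 / α - L / 2) * ‖v - μ‖ ^ 2 ≥ 0 := by
    apply mul_nonneg _ hsq
    have : L < 1 / α := by
      rw [lt_div_iff₀ hα0]; nlinarith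
    linarith
  have : ⟪g, v - μ⟫ - L / 2 * ‖v - μ‖ ^ 2 ≥ 0 := by
    have h4 : ‖v - μ‖ ^ 2 / α = (1/α) * ‖v - μ‖ ^ 2 := by ring
    nlinarith [hinner]
  linarith [hdes]
end

section
/- Let K be a positive integer, r > 0, and x ∈ ℝ^K. Let C = {μ ∈ ℝ^K : μ_k ≥ 0 for all k, and ‖μ‖ ≤ r} be the intersection of the closed Euclidean ball of radius r with the nonnegative orthant, and let [x]₊ ∈ ℝ^K denote the componentwise positive part of x, ([x]₊)_k = max(x_k, 0). Then the point μ* = (r / max(r, ‖[x]₊‖))·[x]₊ belongs to C and is the unique minimizer of ‖μ − x‖ over μ ∈ C; i.e. μ* is the Euclidean projection of x onto C. -/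
open scoped RealInnerProductSpace


/-- The Euclidean projection of `x ∈ ℝ^K` onto the intersection of the closed ball of
radius `r` with the nonnegative orthant is `(r / max(r, ‖[x]₊‖)) • [x]₊`, where `[x]₊`
is the componentwise positive part of `x`. -/
theorem stmt_3 (K : ℕ) (hK : 0 < K) (r : ℝ) (hr : 0 < r)
    (x : EuclideanSpace ℝ (Fin K)) :
    let xplus : EuclideanSpace ℝ (Fin K) := WithLp.toLp 2 (fun k => max (x k) 0)
    let μstar : EuclideanSpace ℝ (Fin K) := (r / max r ‖xplus‖) • xplus
    let C : Set (EuclideanSpace ℝ (Fin K)) := {μ | (∀ k, 0 ≤ μ k) ∧ ‖μ‖ ≤ r}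
    μstar ∈ C ∧ ∀ μ ∈ C, μ ≠ μstar → ‖μstar - x‖ < ‖μ - x‖ := by
  intro xplus μstar C
  set M := max r ‖xplus‖ with hM
  have hMpos : (0:ℝ) < M := lt_max_of_lt_left hr
  set s := r / M with hs
  have ht0 : (0:ℝ) ≤ s := div_nonneg hr.le hMpos.le
  have ht1 : s ≤ 1 := (div_le_one hMpos).mpr (le_max_left _ _)
  have hxp_nonneg : ∀ k, 0 ≤ xplus k := fun k => le_max_right _ _
  have hμstar_def : μstar = s • xplus := rfl
  have hnorm_μstar : ‖μstar‖ = s * ‖xplus‖ := by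
    rw [hμstar_def, norm_smul, Real.norm_of_nonneg ht0]
  have hmem : μstar ∈ C := by
    constructor
    · intro k
      have : μstar k = s * xplus k := rfl
      rw [this]
      exact mul_nonneg ht0 (hxp_nonneg k)
    · rw [hnorm_μstar]
      calc s * ‖xplus‖ ≤ s * M := by
            exact mul_le_mul_of_nonneg_left (le_max_right _ _) ht0
        _ = r := by rw [hs]; field_simp
  refine ⟨hmem, ?_⟩
  intro μ hμ hne
  obtain ⟨hμ_nonneg, hμ_norm⟩ := hμ
  set xminus : EuclideanSpace ℝ (Fin K) := WithLp.toLp 2 (fun k => min (x k) 0) with hxm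
  have hx : x = xplus + xminus := by
    ext k
    have : xplus k + xminus k = max (x k) 0 + min (x k) 0 := rfl
    show x k = xplus k + xminus k
    rw [this, max_add_min]; ring
  have hdecomp : x - μstar = (1 - s) • xplus + xminus := by
    rw [hμstar_def, hx]; module
  have hortho : (inner ℝ xminus xplus : ℝ) = 0 := by
    rw [PiLp.inner_apply]
    apply Finset.sum_eq_zero; intro k _
    rcases le_or_gt (x k) 0 with h | h
    · have : xplus k = 0 := max_eq_right h
      simp [this]
    · have : xminus k = 0 := min_eq_right h.le
      simp [this]
  have hNle : (inner ℝ xminus μ : ℝ) ≤ 0 := by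
    rw [PiLp.inner_apply]
    apply Finset.sum_nonpos; intro k _
    have h1 : xminus k ≤ 0 := min_le_right _ _
    have h2 : 0 ≤ μ k := hμ_nonneg k
    simpa using mul_nonpos_of_nonneg_of_nonpos h2 h1
  have hinner : (inner ℝ (x - μstar) (μ - μstar) : ℝ) =
      (1 - s) * ((inner ℝ xplus μ : ℝ) - s * ‖xplus‖ ^ 2) +
        ((inner ℝ xminus μ : ℝ) - s * (inner ℝ xminus xplus : ℝ)) := by
    rw [hdecomp, hμstar_def]
    simp only [inner_add_left, inner_sub_right, real_inner_smul_left, real_inner_smul_right,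
      real_inner_self_eq_norm_sq]
    ring
  have hfirst : (1 - s) * ((inner ℝ xplus μ : ℝ) - s * ‖xplus‖ ^ 2) ≤ 0 := by
    rcases le_or_gt ‖xplus‖ r with h | h
    · have : s = 1 := by rw [hs, hM, max_eq_left h, div_self hr.ne']
      simp [this]
    · have hMx : M = ‖xplus‖ := max_eq_right h.le
      have hcs : (inner ℝ xplus μ : ℝ) ≤ ‖xplus‖ * ‖μ‖ := real_inner_le_norm _ _
      have h2 : (inner ℝ xplus μ : ℝ) ≤ ‖xplus‖ * r :=
        hcs.trans (mul_le_mul_of_nonneg_left hμ_norm (norm_nonneg _))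
      have hne0 : ‖xplus‖ ≠ 0 := (hr.trans h).ne'
      have h3 : s * ‖xplus‖ ^ 2 = r * ‖xplus‖ := by
        rw [hs, hMx]; field_simp
      apply mul_nonpos_of_nonneg_of_nonpos (by linarith)
      rw [h3]; linarith [h2]
  have hkey : (inner ℝ (x - μstar) (μ - μstar) : ℝ) ≤ 0 := by
    rw [hinner, hortho]
    have := hNle
    nlinarith
  have expand : ‖μ - x‖ ^ 2 = ‖μstar - x‖ ^ 2 + 2 * (inner ℝ (μstar - x) (μ - μstar) : ℝ)
      + ‖μ - μstar‖ ^ 2 := by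
    have h : μ - x = (μstar - x) + (μ - μstar) := by abel
    rw [h, norm_add_sq_real]
  have h2 : 0 ≤ (inner ℝ (μstar - x) (μ - μstar) : ℝ) := by
    have h : (inner ℝ (μstar - x) (μ - μstar) : ℝ) = -(inner ℝ (x - μstar) (μ - μstar) : ℝ) := by
      rw [← inner_neg_left, neg_sub]
    rw [h]; linarith
  have h3 : 0 < ‖μ - μstar‖ ^ 2 := by
    have h0 : μ - μstar ≠ 0 := sub_ne_zero.mpr hne
    exact pow_pos (norm_pos_iff.mpr h0) 2
  have hsq : ‖μstar - x‖ ^ 2 < ‖μ - x‖ ^ 2 := by rw [expand]; nlinarith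
  exact lt_of_pow_lt_pow_left₀ 2 (norm_nonneg _) hsq
end

section
/- Fix positive integers M, K, N, constants ζ_d > 0 and ϑ > 0, vectors ν̄_{ik} ∈ ℝ^M for i, k ∈ {1,…,K}, and positive coefficients β_{mi} > 0. Define the total spectral efficiency f(μ) = ∑_{k=1}^K SE_k(μ), where SE_k(μ) = ϑ·(log(b_k(μ) + c_k(μ)) − log c_k(μ)) with b_k(μ) = ζ_d·(ν̄_{kk}ᵀμ̄_k)² and c_k(μ) = ζ_d·(∑_{i≠k}(ν̄_{ik}ᵀμ̄_i)² + (1/N)·∑_{i=1}^K ∑_{m=1}^M β_{mi}·μ_{mi}²) + 1/N². Then f is differentiable on ℝ^{MK} and its gradient ∇f is Lipschitz continuous: there exists L > 0 such that ‖∇f(x) − ∇f(y)‖ ≤ L·‖x − y‖ for all x, y ∈ ℝ^{MK}. -/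
open scoped BigOperators
open Real
set_option maxHeartbeats 1000000

variable {E : Type*} [NormedAddCommGroup E] [InnerProductSpace ℝ E] [CompleteSpace E]

lemma bilin_cs (B : E →L[ℝ] E →L[ℝ] ℝ) (hsym : ∀ x y, B x y = B y x)
    (hpos : ∀ x, 0 ≤ B x x) (x y : E) : (B x y)^2 ≤ B x x * B y y := by
  have h : ∀ t : ℝ, 0 ≤ B y y * (t * t) + (2 * B x y) * t + B x x := by
    intro t
    have h0 := hpos (x + t • y)
    have : B (x + t • y) (x + t • y)
        = B y y * (t * t) + (2 * B x y) * t + B x x := by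
      simp only [map_add, map_smul, ContinuousLinearMap.add_apply,
        ContinuousLinearMap.smul_apply, smul_eq_mul]
      rw [hsym y x]; ring
    linarith [this ▸ h0]
  have hd := discrim_le_zero h
  rw [discrim] at hd
  nlinarith

lemma bilin_deriv (B : E →L[ℝ] E →L[ℝ] ℝ) (hsym : ∀ x y, B x y = B y x) (x : E) :
    HasFDerivAt (fun z => B z z) ((2:ℝ) • B x) x := by
  have hb : IsBoundedBilinearMap ℝ (fun p : E × E => B p.1 p.2) :=
    B.isBoundedBilinearMap
  have h1 : HasFDerivAt (fun z : E => (z, z))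
      ((ContinuousLinearMap.id ℝ E).prod (ContinuousLinearMap.id ℝ E)) x :=
    (hasFDerivAt_id x).prodMk (hasFDerivAt_id x)
  have h2 : HasFDerivAt ((fun p : E × E => B p.1 p.2) ∘ (fun z : E => (z, z)))
      ((hb.deriv (x, x)).comp
        ((ContinuousLinearMap.id ℝ E).prod (ContinuousLinearMap.id ℝ E))) x :=
    HasFDerivAt.comp x (hb.hasFDerivAt (x, x)) h1
  refine h2.congr_fderiv ?_
  ext v
  simp [hb.deriv_apply, hsym v x, two_mul]

lemma key (B : E →L[ℝ] E →L[ℝ] ℝ) (hsym : ∀ x y, B x y = B y x)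
    (hpos : ∀ x, 0 ≤ B x x) (ε : ℝ) (hε : 0 < ε) :
    (∀ x, HasFDerivAt (fun z => Real.log (B z z + ε))
        ((B x x + ε)⁻¹ • ((2:ℝ) • B x)) x) ∧
    ∀ x y, ‖(B x x + ε)⁻¹ • ((2:ℝ) • B x) - (B y y + ε)⁻¹ • ((2:ℝ) • B y)‖
      ≤ (6 * ‖B‖ / ε) * ‖x - y‖ := by
  have hp : ∀ x, 0 < B x x + ε := fun x => by linarith [hpos x]
  constructor
  · intro x
    have hq : HasFDerivAt (fun z => B z z + ε) ((2:ℝ) • B x) x :=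
      (bilin_deriv B hsym x).add_const ε
    exact (Real.hasDerivAt_log (hp x).ne').comp_hasFDerivAt x hq
  · intro x y
    set px := B x x + ε with hpx
    set py := B y y + ε with hpy
    have hpx0 : 0 < px := hp x
    have hpy0 : 0 < py := hp y
    have hεx : ε ≤ px := by simp only [hpx]; linarith [hpos x]
    have hεy : ε ≤ py := by simp only [hpy]; linarith [hpos y]
    clear_value px py
    apply ContinuousLinearMap.opNorm_le_bound _ (by positivity)
    intro v
    have happ : (px⁻¹ • ((2:ℝ) • B x) - py⁻¹ • ((2:ℝ) • B y)) v
        = 2 * (px⁻¹ * B x v - py⁻¹ * B y v) := by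
      simp [ContinuousLinearMap.sub_apply, ContinuousLinearMap.smul_apply,
        smul_eq_mul]; ring
    rw [happ]
    -- scalar estimate
    have hsplit : px⁻¹ * B x v - py⁻¹ * B y v
        = (py * (B x v - B y v) + (py - px) * B y v) / (px * py) := by
      field_simp; ring
    have hBd : |B x v - B y v| ≤ ‖B‖ * ‖x - y‖ * ‖v‖ := by
      have : B x v - B y v = B (x - y) v := by simp [map_sub]
      rw [this]
      calc |B (x-y) v| = ‖B (x-y) v‖ := rfl
        _ ≤ ‖B‖ * ‖x-y‖ * ‖v‖ := B.le_opNorm₂ _ _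
    have habs : ∀ u w : E, |B u w| ≤ (Real.sqrt ‖B‖ * ‖u‖) * Real.sqrt (B w w + ε) := by
      intro u w
      have hBuu : B u u ≤ ‖B‖ * ‖u‖ ^ 2 := by
        have h := B.le_opNorm₂ u u
        have := le_abs_self (B u u)
        have habs2 : |B u u| = ‖B u u‖ := rfl
        nlinarith [norm_nonneg u]
      have h1 : (B u w)^2 ≤ (‖B‖ * ‖u‖^2) * (B w w + ε) := by
        nlinarith [bilin_cs B hsym hpos u w, hpos w, hpos u, hε]
      have h3 := Real.sqrt_le_sqrt h1
      rwa [Real.sqrt_sq_eq_abs, Real.sqrt_mul (by positivity), Real.sqrt_mul (norm_nonneg B),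
        Real.sqrt_sq (norm_nonneg u)] at h3
    set nB := ‖B‖ with hnB
    set s := Real.sqrt nB with hs
    set sx := Real.sqrt px with hsx
    set sy := Real.sqrt py with hsy
    have hss : s * s = nB := Real.mul_self_sqrt (norm_nonneg B)
    have hsxsx : sx * sx = px := Real.mul_self_sqrt hpx0.le
    have hsysy : sy * sy = py := Real.mul_self_sqrt hpy0.le
    have hsx0 : 0 < sx := Real.sqrt_pos.mpr hpx0
    have hsy0 : 0 < sy := Real.sqrt_pos.mpr hpy0
    have hsε : Real.sqrt ε ≤ sx := Real.sqrt_le_sqrt hεx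
    have hsε' : Real.sqrt ε ≤ sy := Real.sqrt_le_sqrt hεy
    have hεs : Real.sqrt ε * Real.sqrt ε = ε := Real.mul_self_sqrt hε.le
    clear_value nB s sx sy
    have hs0 : 0 ≤ s := hs ▸ Real.sqrt_nonneg _
    have hnB0 : 0 ≤ nB := hnB ▸ norm_nonneg B
    have hεxy : ε ≤ sx * sy := by nlinarith [Real.sqrt_nonneg ε]
    have f5 : sx * sy ≤ px * py / ε := by
      rw [le_div_iff₀ hε]
      have h1 : sx * sy * ε ≤ (sx * sy) * (sx * sy) :=
        mul_le_mul_of_nonneg_left hεxy (by positivity)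
      have h2 : (sx * sy) * (sx * sy) = px * py := by
        rw [← hsxsx, ← hsysy]; ring
      linarith
    have f6 : py ≤ px * py / ε := by
      rw [le_div_iff₀ hε]
      have := mul_le_mul_of_nonneg_left hεx hpy0.le
      linarith
    have f2 : |B y v| ≤ s * ‖v‖ * sy := by
      have h := habs v y
      simp only [← hpy, ← hsy] at h
      rw [hsym y v]
      calc |B v y| ≤ (s * ‖v‖) * sy := h
        _ = s * ‖v‖ * sy := by ring
    have f3 : |py - px| ≤ s * ‖x - y‖ * (sx + sy) := by
      have e1 : py - px = B (y - x) y + B (y - x) x := by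
        have hx := hsym x y
        simp only [hpx, hpy, map_sub, ContinuousLinearMap.sub_apply]
        linarith
      have h1 := habs (y - x) y
      have h2 := habs (y - x) x
      simp only [← hpy, ← hsy] at h1
      simp only [← hpx, ← hsx] at h2
      have hnr : ‖y - x‖ = ‖x - y‖ := norm_sub_rev y x
      calc |py - px| = |B (y-x) y + B (y-x) x| := by rw [e1]
        _ ≤ |B (y-x) y| + |B (y-x) x| := abs_add_le _ _
        _ ≤ (s * ‖y-x‖) * sy + (s * ‖y-x‖) * sx := add_le_add h1 h2
        _ = s * ‖x - y‖ * (sx + sy) := by rw [hnr]; ring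
    have hnum : |py * (B x v - B y v) + (py - px) * B y v|
        ≤ 3 * (px * py / ε) * (nB * ‖x - y‖ * ‖v‖) := by
      have t1 : |py * (B x v - B y v) + (py - px) * B y v|
          ≤ py * |B x v - B y v| + |py - px| * |B y v| := by
        calc |py * (B x v - B y v) + (py - px) * B y v|
            ≤ |py * (B x v - B y v)| + |(py - px) * B y v| := abs_add_le _ _
          _ = py * |B x v - B y v| + |py - px| * |B y v| := by
              rw [abs_mul, abs_mul, abs_of_pos hpy0]
      have t2 : py * |B x v - B y v| ≤ py * (nB * ‖x - y‖ * ‖v‖) :=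
        mul_le_mul_of_nonneg_left hBd hpy0.le
      have t3 : |py - px| * |B y v| ≤ (s * ‖x - y‖ * (sx + sy)) * (s * ‖v‖ * sy) :=
        mul_le_mul f3 f2 (abs_nonneg _)
          (mul_nonneg (mul_nonneg hs0 (norm_nonneg _)) (by linarith))
      have t4 : (s * ‖x - y‖ * (sx + sy)) * (s * ‖v‖ * sy)
          = nB * ‖x - y‖ * ‖v‖ * (sx * sy + py) := by
        have : (s * ‖x - y‖ * (sx + sy)) * (s * ‖v‖ * sy)
            = (s * s) * ‖x - y‖ * ‖v‖ * (sx * sy + sy * sy) := by ring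
        rw [this, hss, hsysy]
      have hnn : (0:ℝ) ≤ nB * ‖x - y‖ * ‖v‖ :=
        mul_nonneg (mul_nonneg hnB0 (norm_nonneg _)) (norm_nonneg _)
      have t5 : nB * ‖x - y‖ * ‖v‖ * (sx * sy + py)
          ≤ nB * ‖x - y‖ * ‖v‖ * (2 * (px * py / ε)) := by
        apply mul_le_mul_of_nonneg_left _ hnn
        linarith
      have t6 : py * (nB * ‖x - y‖ * ‖v‖) ≤ (px * py / ε) * (nB * ‖x - y‖ * ‖v‖) :=
        mul_le_mul_of_nonneg_right f6 hnn
      calc |py * (B x v - B y v) + (py - px) * B y v|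
          ≤ py * |B x v - B y v| + |py - px| * |B y v| := t1
        _ ≤ py * (nB * ‖x - y‖ * ‖v‖) + nB * ‖x - y‖ * ‖v‖ * (sx * sy + py) := by
            rw [← t4]; exact add_le_add t2 t3
        _ ≤ (px * py / ε) * (nB * ‖x - y‖ * ‖v‖)
            + nB * ‖x - y‖ * ‖v‖ * (2 * (px * py / ε)) := add_le_add t6 t5
        _ = 3 * (px * py / ε) * (nB * ‖x - y‖ * ‖v‖) := by ring
    have hdiv : |py * (B x v - B y v) + (py - px) * B y v| / (px * py)
        ≤ 3 / ε * (nB * ‖x - y‖ * ‖v‖) := by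
      rw [div_le_iff₀ (mul_pos hpx0 hpy0)]
      calc |py * (B x v - B y v) + (py - px) * B y v|
          ≤ 3 * (px * py / ε) * (nB * ‖x - y‖ * ‖v‖) := hnum
        _ = 3 / ε * (nB * ‖x - y‖ * ‖v‖) * (px * py) := by field_simp
    calc ‖2 * (px⁻¹ * B x v - py⁻¹ * B y v)‖
        = 2 * |px⁻¹ * B x v - py⁻¹ * B y v| := by
          rw [Real.norm_eq_abs, abs_mul, abs_two]
      _ = 2 * (|py * (B x v - B y v) + (py - px) * B y v| / (px * py)) := by
          rw [hsplit, abs_div, abs_of_pos (mul_pos hpx0 hpy0)]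
      _ ≤ 2 * (3 / ε * (nB * ‖x - y‖ * ‖v‖)) := by linarith
      _ = 6 * nB / ε * ‖x - y‖ * ‖v‖ := by ring


noncomputable def lfun (M K : ℕ) (ν : Fin K → Fin K → Fin M → ℝ) (k i : Fin K) :
    EuclideanSpace ℝ (Fin M × Fin K) →L[ℝ] ℝ :=
  ∑ m : Fin M, ν i k m • EuclideanSpace.proj (m, i)

lemma lfun_apply (M K : ℕ) (ν : Fin K → Fin K → Fin M → ℝ) (k i : Fin K)
    (μ : EuclideanSpace ℝ (Fin M × Fin K)) :
    lfun M K ν k i μ = ∑ m : Fin M, ν i k m * μ (m, i) := by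
  simp [lfun, ContinuousLinearMap.sum_apply, PiLp.proj_apply]

noncomputable def rk1 {E : Type*} [NormedAddCommGroup E] [NormedSpace ℝ E]
    (u : E →L[ℝ] ℝ) : E →L[ℝ] E →L[ℝ] ℝ := u.smulRight u

lemma rk1_apply {E : Type*} [NormedAddCommGroup E] [NormedSpace ℝ E]
    (u : E →L[ℝ] ℝ) (x y : E) : rk1 u x y = u x * u y := by
  simp [rk1, mul_comm]

noncomputable def Bc (M K N : ℕ) (ζd : ℝ) (ν : Fin K → Fin K → Fin M → ℝ)
    (β : Fin M → Fin K → ℝ) (k : Fin K) :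
    EuclideanSpace ℝ (Fin M × Fin K) →L[ℝ] EuclideanSpace ℝ (Fin M × Fin K) →L[ℝ] ℝ :=
  ζd • ((∑ i ∈ Finset.univ.erase k, rk1 (lfun M K ν k i))
    + (1 / (N:ℝ)) • ∑ i : Fin K, ∑ m : Fin M, β m i • rk1 (EuclideanSpace.proj (m, i)))

noncomputable def Bb (M K N : ℕ) (ζd : ℝ) (ν : Fin K → Fin K → Fin M → ℝ)
    (β : Fin M → Fin K → ℝ) (k : Fin K) :
    EuclideanSpace ℝ (Fin M × Fin K) →L[ℝ] EuclideanSpace ℝ (Fin M × Fin K) →L[ℝ] ℝ :=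
  Bc M K N ζd ν β k + ζd • rk1 (lfun M K ν k k)

lemma Bc_apply (M K N : ℕ) (ζd : ℝ) (ν : Fin K → Fin K → Fin M → ℝ)
    (β : Fin M → Fin K → ℝ) (k : Fin K) (x y : EuclideanSpace ℝ (Fin M × Fin K)) :
    Bc M K N ζd ν β k x y
      = ζd * ((∑ i ∈ Finset.univ.erase k,
          (∑ m : Fin M, ν i k m * x (m, i)) * (∑ m : Fin M, ν i k m * y (m, i)))
        + (1 / (N:ℝ)) * ∑ i : Fin K, ∑ m : Fin M, β m i * (x (m, i) * y (m, i))) := by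
  simp only [Bc, ContinuousLinearMap.smul_apply, ContinuousLinearMap.add_apply,
    ContinuousLinearMap.sum_apply, rk1_apply, lfun_apply, PiLp.proj_apply,
    smul_eq_mul]

lemma Bb_apply (M K N : ℕ) (ζd : ℝ) (ν : Fin K → Fin K → Fin M → ℝ)
    (β : Fin M → Fin K → ℝ) (k : Fin K) (x y : EuclideanSpace ℝ (Fin M × Fin K)) :
    Bb M K N ζd ν β k x y
      = Bc M K N ζd ν β k x y
        + ζd * ((∑ m : Fin M, ν k k m * x (m, k)) * (∑ m : Fin M, ν k k m * y (m, k))) := by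
  simp [Bb, ContinuousLinearMap.add_apply, ContinuousLinearMap.smul_apply,
    rk1_apply, lfun_apply, smul_eq_mul]

lemma Bc_symm (M K N : ℕ) (ζd : ℝ) (ν : Fin K → Fin K → Fin M → ℝ)
    (β : Fin M → Fin K → ℝ) (k : Fin K) (x y : EuclideanSpace ℝ (Fin M × Fin K)) :
    Bc M K N ζd ν β k x y = Bc M K N ζd ν β k y x := by
  rw [Bc_apply, Bc_apply]
  congr 1
  congr 1
  · exact Finset.sum_congr rfl fun i _ => mul_comm _ _
  · congr 1
    exact Finset.sum_congr rfl fun i _ => Finset.sum_congr rfl fun m _ => by ring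

lemma Bb_symm (M K N : ℕ) (ζd : ℝ) (ν : Fin K → Fin K → Fin M → ℝ)
    (β : Fin M → Fin K → ℝ) (k : Fin K) (x y : EuclideanSpace ℝ (Fin M × Fin K)) :
    Bb M K N ζd ν β k x y = Bb M K N ζd ν β k y x := by
  rw [Bb_apply, Bb_apply, Bc_symm]
  ring

lemma Bc_pos (M K N : ℕ) (ζd : ℝ) (hζd : 0 ≤ ζd) (ν : Fin K → Fin K → Fin M → ℝ)
    (β : Fin M → Fin K → ℝ) (hβ : ∀ m i, 0 ≤ β m i) (k : Fin K)
    (x : EuclideanSpace ℝ (Fin M × Fin K)) : 0 ≤ Bc M K N ζd ν β k x x := by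
  rw [Bc_apply]
  refine mul_nonneg hζd (add_nonneg ?_ (mul_nonneg (by positivity) ?_))
  · exact Finset.sum_nonneg fun i _ => mul_self_nonneg _
  · exact Finset.sum_nonneg fun i _ => Finset.sum_nonneg fun m _ =>
      mul_nonneg (hβ m i) (mul_self_nonneg _)

lemma Bb_pos (M K N : ℕ) (ζd : ℝ) (hζd : 0 ≤ ζd) (ν : Fin K → Fin K → Fin M → ℝ)
    (β : Fin M → Fin K → ℝ) (hβ : ∀ m i, 0 ≤ β m i) (k : Fin K)
    (x : EuclideanSpace ℝ (Fin M × Fin K)) : 0 ≤ Bb M K N ζd ν β k x x := by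
  rw [Bb_apply]
  have := Bc_pos M K N ζd hζd ν β hβ k x
  nlinarith [mul_self_nonneg (∑ m : Fin M, ν k k m * x (m, k))]

/-- The total spectral efficiency `f(μ) = ∑ₖ SE_k(μ)` is differentiable on `ℝ^{MK}`
and its gradient is Lipschitz continuous. -/
theorem stmt_10 (M K N : ℕ) (hM : 0 < M) (hK : 0 < K) (hN : 0 < N)
    (ζd : ℝ) (hζd : 0 < ζd) (ϑ : ℝ) (hϑ : 0 < ϑ)
    (ν : Fin K → Fin K → Fin M → ℝ)
    (β : Fin M → Fin K → ℝ) (hβ : ∀ m i, 0 < β m i) :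
    let b : Fin K → EuclideanSpace ℝ (Fin M × Fin K) → ℝ := fun k μ =>
      ζd * (∑ m : Fin M, ν k k m * μ (m, k)) ^ 2
    let c : Fin K → EuclideanSpace ℝ (Fin M × Fin K) → ℝ := fun k μ =>
      ζd * ((∑ i ∈ Finset.univ.erase k, (∑ m : Fin M, ν i k m * μ (m, i)) ^ 2)
        + (1 / (N : ℝ)) * ∑ i : Fin K, ∑ m : Fin M, β m i * (μ (m, i)) ^ 2)
        + 1 / (N : ℝ) ^ 2
    let SE : Fin K → EuclideanSpace ℝ (Fin M × Fin K) → ℝ := fun k μ =>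
      ϑ * (Real.log (b k μ + c k μ) - Real.log (c k μ))
    let f : EuclideanSpace ℝ (Fin M × Fin K) → ℝ := fun μ => ∑ k : Fin K, SE k μ
    Differentiable ℝ f ∧
      ∃ L : ℝ, 0 < L ∧ ∀ x y : EuclideanSpace ℝ (Fin M × Fin K),
        ‖gradient f x - gradient f y‖ ≤ L * ‖x - y‖ := by
  intro b c SE f
  have hNR : (0:ℝ) < (N:ℝ) := by exact_mod_cast hN
  set ε : ℝ := 1 / (N:ℝ)^2 with hεdef
  have hεpos : 0 < ε := by rw [hεdef]; positivity
  have hc : ∀ k (μ : EuclideanSpace ℝ (Fin M × Fin K)),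
      c k μ = Bc M K N ζd ν β k μ μ + ε := by
    intro k μ
    simp only [c]
    rw [Bc_apply, hεdef]
    simp only [pow_two]
  have hbc : ∀ k (μ : EuclideanSpace ℝ (Fin M × Fin K)),
      b k μ + c k μ = Bb M K N ζd ν β k μ μ + ε := by
    intro k μ
    rw [Bb_apply, hc k μ]
    simp only [b, pow_two]
    ring
  have hf : f = fun μ => ∑ k : Fin K,
      (ϑ * Real.log (Bb M K N ζd ν β k μ μ + ε)
        - ϑ * Real.log (Bc M K N ζd ν β k μ μ + ε)) := by
    funext μ
    simp only [f, SE]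
    exact Finset.sum_congr rfl fun k _ => by rw [hbc k μ, hc k μ]; ring
  have h1 := fun k : Fin K => key (Bb M K N ζd ν β k) (Bb_symm M K N ζd ν β k)
    (Bb_pos M K N ζd hζd.le ν β (fun m i => (hβ m i).le) k) ε hεpos
  have h2 := fun k : Fin K => key (Bc M K N ζd ν β k) (Bc_symm M K N ζd ν β k)
    (Bc_pos M K N ζd hζd.le ν β (fun m i => (hβ m i).le) k) ε hεpos
  have hD : ∀ x, HasFDerivAt f (∑ k : Fin K,
      (ϑ • ((Bb M K N ζd ν β k x x + ε)⁻¹ • ((2:ℝ) • Bb M K N ζd ν β k x))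
        - ϑ • ((Bc M K N ζd ν β k x x + ε)⁻¹ • ((2:ℝ) • Bc M K N ζd ν β k x)))) x := by
    intro x
    rw [hf]
    apply HasFDerivAt.fun_sum
    intro k _
    exact (((h1 k).1 x).const_mul ϑ).sub (((h2 k).1 x).const_mul ϑ)
  have hdiff : Differentiable ℝ f := fun x => (hD x).differentiableAt
  refine ⟨hdiff, ?_⟩
  set L0 : ℝ := ∑ k : Fin K,
    (ϑ * (6 * ‖Bb M K N ζd ν β k‖ / ε) + ϑ * (6 * ‖Bc M K N ζd ν β k‖ / ε)) with hL0
  have hL0nn : 0 ≤ L0 := Finset.sum_nonneg fun k _ => by positivity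
  refine ⟨L0 + 1, by linarith, ?_⟩
  intro x y
  have hgrad : ‖gradient f x - gradient f y‖ = ‖fderiv ℝ f x - fderiv ℝ f y‖ := by
    show ‖(InnerProductSpace.toDual ℝ _).symm (fderiv ℝ f x)
        - (InnerProductSpace.toDual ℝ _).symm (fderiv ℝ f y)‖ = _
    rw [← map_sub, LinearIsometryEquiv.norm_map]
  rw [hgrad, (hD x).fderiv, (hD y).fderiv, ← Finset.sum_sub_distrib]
  calc ‖∑ k : Fin K, ((ϑ • ((Bb M K N ζd ν β k x x + ε)⁻¹ • ((2:ℝ) • Bb M K N ζd ν β k x))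
          - ϑ • ((Bc M K N ζd ν β k x x + ε)⁻¹ • ((2:ℝ) • Bc M K N ζd ν β k x)))
        - (ϑ • ((Bb M K N ζd ν β k y y + ε)⁻¹ • ((2:ℝ) • Bb M K N ζd ν β k y))
          - ϑ • ((Bc M K N ζd ν β k y y + ε)⁻¹ • ((2:ℝ) • Bc M K N ζd ν β k y))))‖
      ≤ ∑ k : Fin K, ‖(ϑ • ((Bb M K N ζd ν β k x x + ε)⁻¹ • ((2:ℝ) • Bb M K N ζd ν β k x))
          - ϑ • ((Bc M K N ζd ν β k x x + ε)⁻¹ • ((2:ℝ) • Bc M K N ζd ν β k x)))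
        - (ϑ • ((Bb M K N ζd ν β k y y + ε)⁻¹ • ((2:ℝ) • Bb M K N ζd ν β k y))
          - ϑ • ((Bc M K N ζd ν β k y y + ε)⁻¹ • ((2:ℝ) • Bc M K N ζd ν β k y)))‖ :=
        norm_sum_le _ _
    _ ≤ ∑ k : Fin K,
        (ϑ * (6 * ‖Bb M K N ζd ν β k‖ / ε) + ϑ * (6 * ‖Bc M K N ζd ν β k‖ / ε)) * ‖x - y‖ := by
        apply Finset.sum_le_sum
        intro k _
        set g1x := (Bb M K N ζd ν β k x x + ε)⁻¹ • ((2:ℝ) • Bb M K N ζd ν β k x) with hg1x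
        set g1y := (Bb M K N ζd ν β k y y + ε)⁻¹ • ((2:ℝ) • Bb M K N ζd ν β k y) with hg1y
        set g2x := (Bc M K N ζd ν β k x x + ε)⁻¹ • ((2:ℝ) • Bc M K N ζd ν β k x) with hg2x
        set g2y := (Bc M K N ζd ν β k y y + ε)⁻¹ • ((2:ℝ) • Bc M K N ζd ν β k y) with hg2y
        have e : (ϑ • g1x - ϑ • g2x) - (ϑ • g1y - ϑ • g2y)
            = ϑ • (g1x - g1y) - ϑ • (g2x - g2y) := by
          rw [smul_sub, smul_sub]; abel
        rw [e]
        have b1 : ‖g1x - g1y‖ ≤ (6 * ‖Bb M K N ζd ν β k‖ / ε) * ‖x - y‖ := (h1 k).2 x y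
        have b2 : ‖g2x - g2y‖ ≤ (6 * ‖Bc M K N ζd ν β k‖ / ε) * ‖x - y‖ := (h2 k).2 x y
        calc ‖ϑ • (g1x - g1y) - ϑ • (g2x - g2y)‖
            ≤ ‖ϑ • (g1x - g1y)‖ + ‖ϑ • (g2x - g2y)‖ := norm_sub_le _ _
          _ = ϑ * ‖g1x - g1y‖ + ϑ * ‖g2x - g2y‖ := by
              rw [norm_smul ϑ (g1x - g1y), norm_smul ϑ (g2x - g2y), Real.norm_of_nonneg hϑ.le]
          _ ≤ ϑ * ((6 * ‖Bb M K N ζd ν β k‖ / ε) * ‖x - y‖)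
              + ϑ * ((6 * ‖Bc M K N ζd ν β k‖ / ε) * ‖x - y‖) :=
              add_le_add (mul_le_mul_of_nonneg_left b1 hϑ.le)
                (mul_le_mul_of_nonneg_left b2 hϑ.le)
          _ = (ϑ * (6 * ‖Bb M K N ζd ν β k‖ / ε)
              + ϑ * (6 * ‖Bc M K N ζd ν β k‖ / ε)) * ‖x - y‖ := by ring
    _ = L0 * ‖x - y‖ := by rw [hL0, Finset.sum_mul]
    _ ≤ (L0 + 1) * ‖x - y‖ :=
        mul_le_mul_of_nonneg_right (by linarith) (norm_nonneg _)
end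

section
/- Let E be a finite-dimensional real inner product space, S ⊆ E a nonempty closed convex set, L > 0, f : E → ℝ differentiable with L-Lipschitz gradient, and 0 < α < 1/L. Let sequences (μⁿ), (vⁿ), (zⁿ) in E satisfy: μ¹ ∈ S; for every n ≥ 1, zⁿ⁺¹ ∈ S, vⁿ⁺¹ is a projection of μⁿ + α∇f(μⁿ) onto S, and μⁿ⁺¹ = zⁿ⁺¹ if f(zⁿ⁺¹) ≥ f(vⁿ⁺¹) while μⁿ⁺¹ = vⁿ⁺¹ otherwise. Then for every n ≥ 1, f(μⁿ⁺¹) ≥ f(vⁿ⁺¹) ≥ f(μⁿ), so the sequence (f(μⁿ)) is monotone nondecreasing; if moreover S is compact, then (f(μⁿ)) converges. -/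
open scoped RealInnerProductSpace

lemma descent_aux {E : Type*} [NormedAddCommGroup E] [InnerProductSpace ℝ E] [CompleteSpace E]
    (L : ℝ) (hL : 0 < L) (f : E → ℝ) (hf : Differentiable ℝ f)
    (hlip : ∀ x y : E, ‖gradient f x - gradient f y‖ ≤ L * ‖x - y‖)
    (x y : E) :
    f x + ⟪gradient f x, y - x⟫ - L / 2 * ‖y - x‖ ^ 2 ≤ f y := by
  set c : ℝ → E := fun t => x + t • (y - x) with hc
  have hcc : Continuous c := by
    apply continuous_const.add (continuous_id.smul continuous_const)
  have hderiv : ∀ t : ℝ, HasDerivAt (fun t => f (c t))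
      (⟪gradient f (c t), y - x⟫) t := by
    intro t
    have h1 : HasDerivAt c (y - x) t := by
      have : HasDerivAt (fun t : ℝ => t • (y - x)) ((1:ℝ) • (y - x)) t :=
        (hasDerivAt_id t).smul_const (y - x)
      have h0 := this.const_add x
      simp only [one_smul] at h0
      exact h0
    have h2 := (hf (c t)).hasGradientAt.hasFDerivAt
    have h3 := h2.comp_hasDerivAt t h1
    rw [InnerProductSpace.toDual_apply_apply] at h3
    exact h3
  have hgc : Continuous (gradient f) :=
    (LipschitzWith.of_dist_le_mul (K := ⟨L, hL.le⟩) fun a b => by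
      rw [dist_eq_norm, dist_eq_norm]; exact hlip a b).continuous
  have hcont : Continuous fun t : ℝ => ⟪gradient f (c t), y - x⟫ :=
    (hgc.comp hcc).inner continuous_const
  have hint : f (c 1) - f (c 0) = ∫ t in (0:ℝ)..1, ⟪gradient f (c t), y - x⟫ := by
    rw [intervalIntegral.integral_eq_sub_of_hasDerivAt
      (fun t _ => hderiv t) (hcont.intervalIntegrable 0 1)]
  have hc0 : c 0 = x := by simp [hc]
  have hc1 : c 1 = y := by simp [hc]
  have hlb : ∀ t ∈ Set.Icc (0:ℝ) 1,
      ⟪gradient f x, y - x⟫ - L * t * ‖y - x‖ ^ 2 ≤ ⟪gradient f (c t), y - x⟫ := by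
    intro t ht
    have key : |⟪gradient f (c t) - gradient f x, y - x⟫| ≤ L * t * ‖y - x‖ ^ 2 := by
      calc |⟪gradient f (c t) - gradient f x, y - x⟫|
          ≤ ‖gradient f (c t) - gradient f x‖ * ‖y - x‖ := abs_real_inner_le_norm _ _
        _ ≤ (L * ‖c t - x‖) * ‖y - x‖ := by
            gcongr; exact hlip (c t) x
        _ = L * t * ‖y - x‖ ^ 2 := by
            have : ‖c t - x‖ = t * ‖y - x‖ := by
              simp [hc, norm_smul, abs_of_nonneg ht.1]
            rw [this]; ring
    have := neg_abs_le (⟪gradient f (c t) - gradient f x, y - x⟫)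
    have h2 : -(L * t * ‖y - x‖ ^ 2) ≤ ⟪gradient f (c t) - gradient f x, y - x⟫ :=
      le_trans (by linarith) this
    rw [inner_sub_left] at h2
    linarith
  have hIle : ∫ t in (0:ℝ)..1, (⟪gradient f x, y - x⟫ - L * t * ‖y - x‖ ^ 2)
      ≤ ∫ t in (0:ℝ)..1, ⟪gradient f (c t), y - x⟫ := by
    apply intervalIntegral.integral_mono_on zero_le_one
    · exact (Continuous.intervalIntegrable (by continuity) 0 1)
    · exact hcont.intervalIntegrable 0 1
    · exact hlb
  have hval : ∫ t in (0:ℝ)..1, (⟪gradient f x, y - x⟫ - L * t * ‖y - x‖ ^ 2)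
      = ⟪gradient f x, y - x⟫ - L / 2 * ‖y - x‖ ^ 2 := by
    rw [intervalIntegral.integral_sub (intervalIntegrable_const)
      (Continuous.intervalIntegrable (by continuity) 0 1)]
    simp only [intervalIntegral.integral_const]
    rw [show (fun t : ℝ => L * t * ‖y - x‖ ^ 2) = fun t : ℝ => (L * ‖y - x‖ ^ 2) * t by
      funext t; ring]
    rw [intervalIntegral.integral_const_mul, integral_id]
    simp [smul_eq_mul]; ring
  rw [hc0, hc1] at hint
  rw [hval] at hIle
  linarith

lemma step_aux {E : Type*} [NormedAddCommGroup E] [InnerProductSpace ℝ E]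
    [FiniteDimensional ℝ E]
    (S : Set E) (hS_conv : Convex ℝ S)
    (L : ℝ) (hL : 0 < L)
    (f : E → ℝ) (hf : Differentiable ℝ f)
    (hlip : ∀ x y : E, ‖gradient f x - gradient f y‖ ≤ L * ‖x - y‖)
    (α : ℝ) (hα0 : 0 < α) (hα1 : α < 1 / L)
    (m w : E) (hm : m ∈ S) (hw : w ∈ S)
    (hproj : ∀ p ∈ S, ‖w - (m + α • gradient f m)‖ ≤ ‖p - (m + α • gradient f m)‖) :
    f m ≤ f w := by
  set g := gradient f m with hg
  set u := m + α • g with hu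
  have hiInf : ‖u - w‖ = ⨅ p : S, ‖u - p‖ := by
    haveI : Nonempty S := ⟨⟨m, hm⟩⟩
    apply le_antisymm
    · exact le_ciInf fun p => by
        rw [norm_sub_rev, norm_sub_rev u]; exact hproj p p.2
    · exact ciInf_le (f := fun p : S => ‖u - (p:E)‖) ⟨0, by rintro x ⟨p, rfl⟩; exact norm_nonneg _⟩ ⟨w, hw⟩
  have hvar := (norm_eq_iInf_iff_real_inner_le_zero hS_conv hw).mp hiInf m hm
  -- ⟪u - w, m - w⟫ ≤ 0
  have hexp : ⟪u - w, m - w⟫ = ‖m - w‖ ^ 2 + α * ⟪g, m - w⟫ := by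
    rw [hu, show m + α • g - w = (m - w) + α • g by abel, inner_add_left,
      real_inner_smul_left, real_inner_self_eq_norm_sq]
  have hkey : α * ⟪g, w - m⟫ ≥ ‖w - m‖ ^ 2 := by
    have h1 : ⟪g, w - m⟫ = -⟪g, m - w⟫ := by
      rw [show w - m = -(m - w) by abel, inner_neg_right]
    have h2 : ‖w - m‖ = ‖m - w‖ := norm_sub_rev _ _
    rw [h1, h2]; nlinarith [hexp ▸ hvar]
  have hdesc := descent_aux L hL f hf hlip m w
  have hαL : L < 1 / α := by
    rw [lt_div_iff₀ hα0]
    have := (lt_div_iff₀ hL).mp hα1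
    nlinarith
  have hginner : ⟪g, w - m⟫ ≥ ‖w - m‖ ^ 2 / α := by
    rw [ge_iff_le, div_le_iff₀ hα0]
    nlinarith [hkey]
  have hns : (0:ℝ) ≤ ‖w - m‖ ^ 2 := sq_nonneg _
  rw [← hg] at hdesc
  have hfin : L / 2 * ‖w - m‖ ^ 2 ≤ ‖w - m‖ ^ 2 / α := by
    have heq : ‖w - m‖ ^ 2 / α = 1 / α * ‖w - m‖ ^ 2 := by
      rw [div_eq_mul_one_div, mul_comm]
    have h2 : L / 2 * ‖w - m‖ ^ 2 ≤ 1 / α * ‖w - m‖ ^ 2 :=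
      mul_le_mul_of_nonneg_right (by linarith) hns
    linarith
  linarith

/-- Monotonicity of the monotone APG iteration: `f(μⁿ⁺¹) ≥ f(vⁿ⁺¹) ≥ f(μⁿ)` for every
`n ≥ 1`, so `(f(μⁿ))` is nondecreasing; if moreover `S` is compact, `(f(μⁿ))` converges. -/
theorem stmt_11 {E : Type*} [NormedAddCommGroup E] [InnerProductSpace ℝ E]
    [FiniteDimensional ℝ E]
    (S : Set E) (hS_ne : S.Nonempty) (hS_closed : IsClosed S) (hS_conv : Convex ℝ S)
    (L : ℝ) (hL : 0 < L)
    (f : E → ℝ) (hf : Differentiable ℝ f)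
    (hlip : ∀ x y : E, ‖gradient f x - gradient f y‖ ≤ L * ‖x - y‖)
    (α : ℝ) (hα0 : 0 < α) (hα1 : α < 1 / L)
    (μ v z : ℕ → E)
    (hμ1 : μ 1 ∈ S)
    (hz : ∀ n, 1 ≤ n → z (n + 1) ∈ S)
    (hv : ∀ n, 1 ≤ n → v (n + 1) ∈ S ∧
      ∀ w ∈ S, ‖v (n + 1) - (μ n + α • gradient f (μ n))‖ ≤
        ‖w - (μ n + α • gradient f (μ n))‖)
    (hμ : ∀ n, 1 ≤ n →
      μ (n + 1) = if f (z (n + 1)) ≥ f (v (n + 1)) then z (n + 1) else v (n + 1)) :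
    (∀ n, 1 ≤ n → f (μ n) ≤ f (v (n + 1)) ∧ f (v (n + 1)) ≤ f (μ (n + 1))) ∧
    (∀ n, 1 ≤ n → f (μ n) ≤ f (μ (n + 1))) ∧
    (IsCompact S →
      ∃ l : ℝ, Filter.Tendsto (fun n => f (μ (n + 1))) Filter.atTop (nhds l)) := by
  have hμS : ∀ n, 1 ≤ n → μ n ∈ S := by
    intro n hn
    induction n, hn using Nat.le_induction with
    | base => exact hμ1
    | succ n hn ih =>
      rw [hμ n hn]
      split_ifs
      · exact hz n hn
      · exact (hv n hn).1
  have hmain : ∀ n, 1 ≤ n → f (μ n) ≤ f (v (n + 1)) ∧ f (v (n + 1)) ≤ f (μ (n + 1)) := by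
    intro n hn
    constructor
    · exact step_aux S hS_conv L hL f hf hlip α hα0 hα1 (μ n) (v (n+1))
        (hμS n hn) (hv n hn).1 (hv n hn).2
    · rw [hμ n hn]
      split_ifs with h
      · exact h
      · exact le_refl _
  have hmono : ∀ n, 1 ≤ n → f (μ n) ≤ f (μ (n + 1)) :=
    fun n hn => le_trans (hmain n hn).1 (hmain n hn).2
  refine ⟨hmain, hmono, fun hK => ?_⟩
  have hMono : Monotone fun n => f (μ (n + 1)) :=
    monotone_nat_of_le_succ fun n => hmono (n + 1) (Nat.le_add_left 1 n)
  have hBdd : BddAbove (Set.range fun n => f (μ (n + 1))) := by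
    obtain ⟨b, hb⟩ := (hK.image hf.continuous).bddAbove
    exact ⟨b, fun x ⟨n, hn⟩ => hn ▸ hb ⟨μ (n + 1), hμS (n + 1) (Nat.le_add_left 1 n), rfl⟩⟩
  exact ⟨_, tendsto_atTop_ciSup hMono hBdd⟩
end

section
/- Let E be a finite-dimensional real inner product space, S ⊆ E a nonempty compact convex set, L > 0, f : E → ℝ differentiable with L-Lipschitz gradient, and 0 < α < 1/L. Define t₀ = t₁ = 1 and tₙ₊₁ = (√(4tₙ² + 1) + 1)/2 for n ≥ 1. Let sequences (μⁿ), (yⁿ), (zⁿ), (vⁿ) in E satisfy: μ⁰ = μ¹ = z¹ ∈ S, and for every n ≥ 1: yⁿ = μⁿ + (tₙ₋₁/tₙ)(zⁿ − μⁿ) + ((tₙ₋₁ − 1)/tₙ)(μⁿ − μⁿ⁻¹); zⁿ⁺¹ is a projection of yⁿ + α∇f(yⁿ) onto S; vⁿ⁺¹ is a projection of μⁿ + α∇f(μⁿ) onto S; and μⁿ⁺¹ = zⁿ⁺¹ if f(zⁿ⁺¹) ≥ f(vⁿ⁺¹), μⁿ⁺¹ = vⁿ⁺¹ otherwise. Then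 the sequence (μⁿ) is bounded, and every accumulation point μ* of (μⁿ) is a critical (stationary) point of the problem of maximizing f over S, i.e. ⟨∇f(μ*), z − μ*⟩ ≤ 0 for all z ∈ S. -/
open scoped RealInnerProductSpace
open Filter Topology

/-- Base quadratic bound with constant `L` via the mean value inequality. -/
lemma aux_base {E : Type*} [NormedAddCommGroup E] [InnerProductSpace ℝ E]
    [FiniteDimensional ℝ E] (f : E → ℝ) (hf : Differentiable ℝ f)
    (L : ℝ) (hL : 0 ≤ L)
    (hlip : ∀ x y : E, ‖gradient f x - gradient f y‖ ≤ L * ‖x - y‖)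
    (x w : E) : |f w - f x - ⟪gradient f x, w - x⟫| ≤ L * ‖w - x‖ ^ 2 := by
  have hfd : ∀ u : E, fderiv ℝ f u = InnerProductSpace.toDual ℝ E (gradient f u) := fun u =>
    ((InnerProductSpace.toDual ℝ E).apply_symm_apply _).symm
  set s := Metric.closedBall x ‖w - x‖ with hs
  have hxs : x ∈ s := by simp [hs, norm_nonneg]
  have hws : w ∈ s := by simp [hs, Metric.mem_closedBall, dist_eq_norm]
  have key := (convex_closedBall x ‖w - x‖).norm_image_sub_le_of_norm_hasFDerivWithin_le'
    (f' := fderiv ℝ f) (φ := fderiv ℝ f x) (C := L * ‖w - x‖)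
    (fun u _ => (hf u).hasFDerivAt.hasFDerivWithinAt)
    (fun u hu => by
      rw [hfd u, hfd x, ← map_sub, LinearIsometryEquiv.norm_map]
      calc ‖gradient f u - gradient f x‖ ≤ L * ‖u - x‖ := hlip u x
        _ ≤ L * ‖w - x‖ := by
            have : ‖u - x‖ ≤ ‖w - x‖ := by
              simpa [Metric.mem_closedBall, dist_eq_norm] using hu
            exact mul_le_mul_of_nonneg_left this hL)
    hxs hws
  have happ : (fderiv ℝ f x) (w - x) = ⟪gradient f x, w - x⟫ := by
    rw [hfd x]; exact InnerProductSpace.toDual_apply_apply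
  rw [happ] at key
  calc |f w - f x - ⟪gradient f x, w - x⟫| ≤ L * ‖w - x‖ * ‖w - x‖ := key
    _ = L * ‖w - x‖ ^ 2 := by ring

/-- Descent lemma with the sharp constant `L/2`, by dyadic refinement. -/
lemma aux_descent {E : Type*} [NormedAddCommGroup E] [InnerProductSpace ℝ E]
    [FiniteDimensional ℝ E] (f : E → ℝ) (hf : Differentiable ℝ f)
    (L : ℝ) (hL : 0 ≤ L)
    (hlip : ∀ x y : E, ‖gradient f x - gradient f y‖ ≤ L * ‖x - y‖)
    (x w : E) : |f w - f x - ⟪gradient f x, w - x⟫| ≤ L / 2 * ‖w - x‖ ^ 2 := by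
  have main : ∀ n : ℕ, ∀ x w : E,
      |f w - f x - ⟪gradient f x, w - x⟫| ≤ (L / 2 + L / 2 * (1/2) ^ n) * ‖w - x‖ ^ 2 := by
    intro n
    induction n with
    | zero =>
      intro x w
      simpa using aux_base f hf L hL hlip x w
    | succ n ih =>
      intro x w
      set m := x + (2⁻¹ : ℝ) • (w - x) with hm
      have hm1 : m - x = (2⁻¹ : ℝ) • (w - x) := by rw [hm]; abel
      have hm2 : w - m = (2⁻¹ : ℝ) • (w - x) := by
        rw [hm]
        rw [show w - (x + (2⁻¹:ℝ) • (w - x)) = (w - x) - (2⁻¹:ℝ) • (w - x) by abel,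
          show w - x = (1:ℝ) • (w - x) from (one_smul ℝ _).symm]
        rw [smul_smul, ← sub_smul] ; norm_num
      have hn1 : ‖m - x‖ = ‖w - x‖ / 2 := by
        rw [hm1, norm_smul] ; simp [Real.norm_eq_abs] ; ring
      have hn2 : ‖w - m‖ = ‖w - x‖ / 2 := by
        rw [hm2, norm_smul] ; simp [Real.norm_eq_abs] ; ring
      have hid : f w - f x - ⟪gradient f x, w - x⟫ =
          (f m - f x - ⟪gradient f x, m - x⟫) + (f w - f m - ⟪gradient f m, w - m⟫)
          + ⟪gradient f m - gradient f x, w - m⟫ := by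
        rw [inner_sub_left]
        have hsum : ⟪gradient f x, m - x⟫ + ⟪gradient f x, w - m⟫
            = ⟪gradient f x, w - x⟫ := by
          rw [← inner_add_right] ; congr 1 ; abel
        linarith [hsum]
      have h1 := ih x m
      have h2 := ih m w
      have h3 : |⟪gradient f m - gradient f x, w - m⟫| ≤ L * ‖m - x‖ * ‖w - m‖ := by
        calc |⟪gradient f m - gradient f x, w - m⟫|
            ≤ ‖gradient f m - gradient f x‖ * ‖w - m‖ := abs_real_inner_le_norm _ _
          _ ≤ (L * ‖m - x‖) * ‖w - m‖ :=
              mul_le_mul_of_nonneg_right (hlip m x) (norm_nonneg _)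
          _ = L * ‖m - x‖ * ‖w - m‖ := by ring
      rw [hid]
      have habs := abs_add_three (f m - f x - ⟪gradient f x, m - x⟫)
        (f w - f m - ⟪gradient f m, w - m⟫) (⟪gradient f m - gradient f x, w - m⟫)
      rw [hn1] at h1
      rw [hn2] at h2
      rw [hn1, hn2] at h3
      calc |(f m - f x - ⟪gradient f x, m - x⟫) + (f w - f m - ⟪gradient f m, w - m⟫)
          + ⟪gradient f m - gradient f x, w - m⟫|
          ≤ |f m - f x - ⟪gradient f x, m - x⟫| + |f w - f m - ⟪gradient f m, w - m⟫|
            + |⟪gradient f m - gradient f x, w - m⟫| := habs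
        _ ≤ (L / 2 + L / 2 * (1/2) ^ n) * (‖w - x‖ / 2) ^ 2
            + (L / 2 + L / 2 * (1/2) ^ n) * (‖w - x‖ / 2) ^ 2
            + L * (‖w - x‖ / 2) * (‖w - x‖ / 2) := by linarith
        _ = (L / 2 + L / 2 * (1/2) ^ (n+1)) * ‖w - x‖ ^ 2 := by ring
  have htend : Tendsto (fun n : ℕ => (L / 2 + L / 2 * (1/2) ^ n) * ‖w - x‖ ^ 2)
      atTop (𝓝 (L / 2 * ‖w - x‖ ^ 2)) := by
    have hp : Tendsto (fun n : ℕ => ((1:ℝ)/2) ^ n) atTop (𝓝 0) := by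
      apply tendsto_pow_atTop_nhds_zero_of_lt_one <;> norm_num
    have := ((tendsto_const_nhds (x := L / 2)).add (hp.const_mul (L / 2))).mul_const
      (‖w - x‖ ^ 2)
    simpa [mul_comm] using this
  exact ge_of_tendsto' htend (fun n => main n x w)

set_option maxHeartbeats 1000000

/-- Convergence of the monotone APG algorithm with step size `0 < α < 1/L` over a
nonempty compact convex set `S`: the iterates `(μⁿ)` are bounded and every accumulation
point `μ*` is a critical point of maximizing `f` over `S`, i.e.
`⟪∇f(μ*), w − μ*⟫ ≤ 0` for all `w ∈ S`. -/
theorem stmt_12 {E : Type*} [NormedAddCommGroup E] [InnerProductSpace ℝ E]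
    [FiniteDimensional ℝ E]
    (S : Set E) (hS_ne : S.Nonempty) (hS_compact : IsCompact S) (hS_conv : Convex ℝ S)
    (L : ℝ) (hL : 0 < L)
    (f : E → ℝ) (hf : Differentiable ℝ f)
    (hlip : ∀ x y : E, ‖gradient f x - gradient f y‖ ≤ L * ‖x - y‖)
    (α : ℝ) (hα0 : 0 < α) (hα1 : α < 1 / L)
    (t : ℕ → ℝ) (ht0 : t 0 = 1) (ht1 : t 1 = 1)
    (ht : ∀ n, 1 ≤ n → t (n + 1) = (Real.sqrt (4 * t n ^ 2 + 1) + 1) / 2)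
    (μ y z v : ℕ → E)
    (hμ0 : μ 0 = μ 1) (hz1 : μ 1 = z 1) (hμ1 : μ 1 ∈ S)
    (hy : ∀ n, 1 ≤ n → y n = μ n + (t (n - 1) / t n) • (z n - μ n)
      + ((t (n - 1) - 1) / t n) • (μ n - μ (n - 1)))
    (hz : ∀ n, 1 ≤ n → z (n + 1) ∈ S ∧
      ∀ w ∈ S, ‖z (n + 1) - (y n + α • gradient f (y n))‖ ≤
        ‖w - (y n + α • gradient f (y n))‖)
    (hv : ∀ n, 1 ≤ n → v (n + 1) ∈ S ∧
      ∀ w ∈ S, ‖v (n + 1) - (μ n + α • gradient f (μ n))‖ ≤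
        ‖w - (μ n + α • gradient f (μ n))‖)
    (hμ : ∀ n, 1 ≤ n →
      μ (n + 1) = if f (z (n + 1)) ≥ f (v (n + 1)) then z (n + 1) else v (n + 1)) :
    (∃ C : ℝ, ∀ n, ‖μ n‖ ≤ C) ∧
    ∀ μstar : E,
      (∃ φ : ℕ → ℕ, StrictMono φ ∧
        Filter.Tendsto (fun j => μ (φ j)) Filter.atTop (nhds μstar)) →
      ∀ w ∈ S, ⟪gradient f μstar, w - μstar⟫ ≤ 0 := by
  -- All iterates stay in `S`.
  have hμS : ∀ n, μ n ∈ S := by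
    intro n
    induction n with
    | zero => rw [hμ0]; exact hμ1
    | succ k _ =>
      rcases Nat.eq_zero_or_pos k with hk | hk
      · subst hk; exact hμ1
      · rw [hμ k hk]
        split_ifs
        · exact (hz k hk).1
        · exact (hv k hk).1
  have hc : 0 < 1 / (2 * α) - L / 2 := by
    have hαL : α * L < 1 := by
      rw [lt_div_iff₀ hL] at hα1; linarith
    have h1 : L / 2 < 1 / (2 * α) := by
      rw [div_lt_div_iff₀ two_pos (by positivity)]
      nlinarith
    linarith
  set c := 1 / (2 * α) - L / 2 with hcdef
  clear_value c
  -- per-step sufficient increase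
  have hstep : ∀ n, 1 ≤ n → f (μ n) + c * ‖v (n + 1) - μ n‖ ^ 2 ≤ f (μ (n + 1)) := by
    intro n hn
    set d := v (n + 1) - μ n with hd
    clear_value d
    have hproj := (hv n hn).2 (μ n) (hμS n)
    have hre : ‖μ n - (μ n + α • gradient f (μ n))‖ = ‖α • gradient f (μ n)‖ := by
      rw [show μ n - (μ n + α • gradient f (μ n)) = -(α • gradient f (μ n)) by abel, norm_neg]
    rw [hre] at hproj
    have hls : v (n + 1) - (μ n + α • gradient f (μ n)) = d - α • gradient f (μ n) := by
      rw [hd]; abel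
    rw [hls] at hproj
    have hsq : ‖d - α • gradient f (μ n)‖ ^ 2 ≤ ‖α • gradient f (μ n)‖ ^ 2 :=
      pow_le_pow_left₀ (norm_nonneg _) hproj 2
    rw [norm_sub_sq_real] at hsq
    have hinner : ⟪d, α • gradient f (μ n)⟫ = α * ⟪gradient f (μ n), d⟫ := by
      rw [real_inner_smul_right, real_inner_comm]
    rw [hinner] at hsq
    have hkey : ‖d‖ ^ 2 ≤ 2 * α * ⟪gradient f (μ n), d⟫ := by nlinarith [hsq]
    have hdes := aux_descent f hf L hL.le hlip (μ n) (v (n + 1))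
    rw [← hd] at hdes
    have hdes' : f (μ n) + ⟪gradient f (μ n), d⟫ - L / 2 * ‖d‖ ^ 2 ≤ f (v (n + 1)) := by
      have := (abs_le.mp hdes).1
      linarith
    have hfv : f (v (n + 1)) ≤ f (μ (n + 1)) := by
      rw [hμ n hn]
      split_ifs with h
      · exact h
      · exact le_rfl
    have hαpos : (0:ℝ) < 2 * α := by linarith
    have hup : c * ‖d‖ ^ 2 ≤ ⟪gradient f (μ n), d⟫ - L / 2 * ‖d‖ ^ 2 := by
      rw [hcdef]
      have h2 : 1 / (2 * α) * ‖d‖ ^ 2 ≤ ⟪gradient f (μ n), d⟫ := by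
        rw [div_mul_eq_mul_div, one_mul, div_le_iff₀ hαpos]
        nlinarith [hkey]
      nlinarith
    linarith [hup, hdes', hfv]
  have hq_nonneg : ∀ n : ℕ, (0:ℝ) ≤ c * ‖v (n + 1) - μ n‖ ^ 2 := fun n => by positivity
  have hmono : ∀ n, f (μ n) ≤ f (μ (n + 1)) := by
    intro n
    rcases Nat.eq_zero_or_pos n with h | h
    · subst h; simp [hμ0]
    · have := hstep n h
      nlinarith [hq_nonneg n]
  have hFmono : Monotone fun n => f (μ n) := monotone_nat_of_le_succ hmono
  obtain ⟨xM, hxM, hM⟩ := hS_compact.exists_isMaxOn hS_ne hf.continuous.continuousOn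
  have hbdd : BddAbove (Set.range fun n => f (μ n)) :=
    ⟨f xM, by rintro _ ⟨n, rfl⟩; exact hM (hμS n)⟩
  have hFlim := tendsto_atTop_ciSup hFmono hbdd
  have hFlim1 : Filter.Tendsto (fun n => f (μ (n + 1))) Filter.atTop
      (𝓝 (⨆ n, f (μ n))) := hFlim.comp (Filter.tendsto_add_atTop_nat 1)
  have hdiffl : Filter.Tendsto (fun n => f (μ (n + 1)) - f (μ n)) Filter.atTop (𝓝 0) := by
    have := hFlim1.sub hFlim
    simpa using this
  have hcq : Filter.Tendsto (fun n => c * ‖v (n + 1) - μ n‖ ^ 2) Filter.atTop (𝓝 0) := by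
    apply tendsto_of_tendsto_of_tendsto_of_le_of_le' tendsto_const_nhds hdiffl
    · exact Filter.Eventually.of_forall hq_nonneg
    · filter_upwards [Filter.eventually_ge_atTop 1] with n hn
      have := hstep n hn; linarith
  have hq : Filter.Tendsto (fun n => ‖v (n + 1) - μ n‖ ^ 2) Filter.atTop (𝓝 0) := by
    have h2 := hcq.const_mul c⁻¹
    simp only [← mul_assoc, inv_mul_cancel₀ hc.ne', one_mul, mul_zero] at h2
    exact h2
  have hnorm0 : Filter.Tendsto (fun n => ‖v (n + 1) - μ n‖) Filter.atTop (𝓝 0) := by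
    have h2 := hq.sqrt
    simp only [Real.sqrt_zero] at h2
    refine h2.congr fun n => ?_
    rw [Real.sqrt_sq (norm_nonneg _)]
  have hvec0 : Filter.Tendsto (fun n => v (n + 1) - μ n) Filter.atTop (𝓝 0) :=
    tendsto_zero_iff_norm_tendsto_zero.mpr hnorm0
  have hgc : Continuous (gradient f) := by
    have hl2 : LipschitzWith (Real.toNNReal L) (gradient f) := by
      apply LipschitzWith.of_dist_le_mul
      intro a b
      rw [dist_eq_norm, dist_eq_norm, Real.coe_toNNReal _ hL.le]
      exact hlip a b
    exact hl2.continuous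
  constructor
  · obtain ⟨C, hC⟩ := isBounded_iff_forall_norm_le.mp hS_compact.isBounded
    exact ⟨C, fun n => hC _ (hμS n)⟩
  · intro μstar hex w hw
    obtain ⟨φ, hφ, hconv⟩ := hex
    have hμstarS : μstar ∈ S :=
      hS_compact.isClosed.mem_of_tendsto hconv (Filter.Eventually.of_forall fun j => hμS _)
    have hφtop : Filter.Tendsto φ Filter.atTop Filter.atTop := hφ.tendsto_atTop
    have hvconv : Filter.Tendsto (fun j => v (φ j + 1)) Filter.atTop (𝓝 μstar) := by
      have h2 : Filter.Tendsto (fun j => v (φ j + 1) - μ (φ j)) Filter.atTop (𝓝 0) :=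
        hvec0.comp hφtop
      have := hconv.add h2
      simpa using this
    have hlimineq : ∀ w' ∈ S, ‖μstar - (μstar + α • gradient f μstar)‖ ≤
        ‖w' - (μstar + α • gradient f μstar)‖ := by
      intro w' hw'
      have htendg : Filter.Tendsto (fun j => μ (φ j) + α • gradient f (μ (φ j)))
          Filter.atTop (𝓝 (μstar + α • gradient f μstar)) :=
        hconv.add (((hgc.tendsto μstar).comp hconv).const_smul α)
      refine le_of_tendsto_of_tendsto (hvconv.sub htendg).norm
        (((tendsto_const_nhds (x := w')).sub htendg).norm) ?_
      filter_upwards [hφtop.eventually_ge_atTop 1] with j hj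
      exact (hv (φ j) hj).2 w' hw'
    have hkey2 : ∀ n : ℕ, 2 * α * ⟪gradient f μstar, w - μstar⟫ ≤
        (1 / (n + 1 : ℝ)) * ‖w - μstar‖ ^ 2 := by
      intro n
      set s : ℝ := 1 / (n + 1 : ℝ) with hsd
      clear_value s
      have hs0 : 0 < s := by rw [hsd]; positivity
      have hs1 : s ≤ 1 := by
        rw [hsd, div_le_one (by positivity)]
        norm_num
      have hws : μstar + s • (w - μstar) ∈ S :=
        hS_conv.add_smul_sub_mem hμstarS hw ⟨hs0.le, hs1⟩
      have h := hlimineq _ hws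
      have hl : μstar - (μstar + α • gradient f μstar) = -(α • gradient f μstar) := by abel
      have hr : μstar + s • (w - μstar) - (μstar + α • gradient f μstar)
          = s • (w - μstar) - α • gradient f μstar := by abel
      rw [hl, hr, norm_neg] at h
      have hsq := pow_le_pow_left₀ (norm_nonneg _) h 2
      rw [norm_sub_sq_real] at hsq
      have e1 : ‖α • gradient f μstar‖ ^ 2 = α ^ 2 * ‖gradient f μstar‖ ^ 2 := by
        rw [norm_smul, mul_pow, Real.norm_eq_abs, sq_abs]
      have e2 : ‖s • (w - μstar)‖ ^ 2 = s ^ 2 * ‖w - μstar‖ ^ 2 := by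
        rw [norm_smul, mul_pow, Real.norm_eq_abs, sq_abs]
      have e3 : ⟪s • (w - μstar), α • gradient f μstar⟫
          = s * (α * ⟪w - μstar, gradient f μstar⟫) := by
        rw [real_inner_smul_left, real_inner_smul_right]
      rw [e1, e2, e3, real_inner_comm (gradient f μstar) (w - μstar)] at hsq
      have h2 : s * (2 * α * ⟪gradient f μstar, w - μstar⟫) ≤ s * (s * ‖w - μstar‖ ^ 2) := by
        linarith [hsq]
      exact le_of_mul_le_mul_left h2 hs0
    have htend0 : Filter.Tendsto (fun n : ℕ => (1 / (n + 1 : ℝ)) * ‖w - μstar‖ ^ 2)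
        Filter.atTop (𝓝 0) := by
      have := tendsto_one_div_add_atTop_nhds_zero_nat.mul_const (‖w - μstar‖ ^ 2)
      simpa using this
    have hfinal : 2 * α * ⟪gradient f μstar, w - μstar⟫ ≤ 0 := ge_of_tendsto' htend0 hkey2
    nlinarith [hfinal]
end

section
/- Fix positive integers M, K, N, constants ζ_d > 0 and ϑ > 0, vectors ν̄_{ik} ∈ ℝ^M for i, k ∈ {1,…,K}, and positive coefficients β_{mi} > 0. Let f(μ) = ∑_{k=1}^K SE_k(μ) be the total spectral efficiency on ℝ^{MK}, let S = {μ ∈ ℝ^{MK} : μ ≥ 0 componentwise and ∑_{k=1}^K μ_{mk}² ≤ 1/N for each m = 1,…,M} be the feasible set, and suppose L > 0 is a Lipschitz constant of ∇f (i.e. ‖∇f(x) − ∇f(y)‖ ≤ L‖x − y‖ for all x, y). If the step size satisfies 0 < α < 1/L, then the iterates (μⁿ) generated by the monotone APG algorithm (with t₀ = t₁ = 1, tₙ₊₁ = (√(4tₙ² + 1) + 1)/2, extrapolation yⁿ = μⁿ + (tₙ₋₁/tₙ)(zⁿ − μⁿ) + ((tₙ₋₁ − 1)/tₙ)(μⁿ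 − μⁿ⁻¹), projected steps zⁿ⁺¹ = P_S(yⁿ + α∇f(yⁿ)) and vⁿ⁺¹ = P_S(μⁿ + α∇f(μⁿ)), and μⁿ⁺¹ chosen as zⁿ⁺¹ if f(zⁿ⁺¹) ≥ f(vⁿ⁺¹) and vⁿ⁺¹ otherwise, starting from μ⁰ = μ¹ = z¹ ∈ S) are bounded, and every accumulation point μ* of (μⁿ) is a critical point of the total spectral efficiency maximization problem max{f(μ) : μ ∈ S}, i.e. ⟨∇f(μ*), z − μ*⟩ ≤ 0 for all z ∈ S. -/
open scoped BigOperators RealInnerProductSpace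

section Aux

variable {E : Type*} [NormedAddCommGroup E] [InnerProductSpace ℝ E] [CompleteSpace E]

/-- Descent lemma (weak form, constant `L` instead of `L/2`). -/
lemma my_descent (f : E → ℝ) (hf : Differentiable ℝ f) (L : ℝ) (hL0 : 0 ≤ L)
    (hlip : ∀ x₁ x₂, ‖gradient f x₁ - gradient f x₂‖ ≤ L * ‖x₁ - x₂‖)
    (x v : E) :
    f x + ⟪gradient f x, v - x⟫ - L * ‖v - x‖ ^ 2 ≤ f v := by
  set g : E → ℝ := fun u => f u - ⟪gradient f x, u⟫ with hg
  have hderiv : ∀ u : E, HasFDerivAt g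
      ((InnerProductSpace.toDual ℝ E) (gradient f u - gradient f x)) u := by
    intro u
    have h1 : HasFDerivAt f ((InnerProductSpace.toDual ℝ E) (gradient f u)) u :=
      (hf u).hasGradientAt.hasFDerivAt
    have h2 : HasFDerivAt (fun u : E => ⟪gradient f x, u⟫)
        ((InnerProductSpace.toDual ℝ E) (gradient f x)) u := by
      have := ((InnerProductSpace.toDual ℝ E) (gradient f x)).hasFDerivAt (x := u)
      simpa [InnerProductSpace.toDual_apply_apply] using this
    rw [map_sub]; exact h1.sub h2
  have key : ‖g v - g x‖ ≤ (L * ‖v - x‖) * ‖v - x‖ := by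
    apply Convex.norm_image_sub_le_of_norm_hasFDerivWithin_le
      (f' := fun u => (InnerProductSpace.toDual ℝ E) (gradient f u - gradient f x))
      (fun u _ => (hderiv u).hasFDerivWithinAt) ?_ (convex_segment x v)
      (left_mem_segment ℝ x v) (right_mem_segment ℝ x v)
    intro u hu
    rw [(InnerProductSpace.toDual ℝ E).norm_map]
    calc ‖gradient f u - gradient f x‖ ≤ L * ‖u - x‖ := hlip u x
      _ ≤ L * ‖v - x‖ := by
          obtain ⟨a, b, ha, hb, hab, rfl⟩ := hu
          have : a • x + b • v - x = b • (v - x) := by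
            rw [smul_sub]; rw [show a = 1 - b by linarith]; module
          rw [this, norm_smul, Real.norm_eq_abs, abs_of_nonneg hb]
          nlinarith [mul_le_mul_of_nonneg_left (show b ≤ (1:ℝ) by linarith)
            (mul_nonneg hL0 (norm_nonneg (v - x)))]
  have h1 : g x - g v ≤ L * ‖v - x‖ * ‖v - x‖ := by
    have := abs_le.mp (by rwa [Real.norm_eq_abs] at key)
    linarith [this.1]
  have h2 : ⟪gradient f x, v⟫ - ⟪gradient f x, x⟫ = ⟪gradient f x, v - x⟫ := by
    rw [inner_sub_right]
  simp only [hg] at h1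
  nlinarith [h1, sq_abs (‖v - x‖)]

/-- Variational characterization of (metric-)projections onto convex sets. -/
lemma my_proj_vi {S : Set E} (hconv : Convex ℝ S) {u pv : E} (hpv : pv ∈ S)
    (hmin : ∀ w ∈ S, ‖pv - u‖ ≤ ‖w - u‖) : ∀ w ∈ S, ⟪u - pv, w - pv⟫ ≤ 0 := by
  have : Nonempty S := ⟨⟨pv, hpv⟩⟩
  rw [← norm_eq_iInf_iff_real_inner_le_zero hconv hpv]
  apply le_antisymm
  · apply le_ciInf
    intro w
    rw [norm_sub_rev u pv, norm_sub_rev u w]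
    exact hmin w w.2
  · exact ciInf_le ⟨0, fun _ ⟨w, hw⟩ => hw ▸ norm_nonneg _⟩ (⟨pv, hpv⟩ : S)

end Aux

set_option maxHeartbeats 1000000 in
/-- Convergence of the monotone APG algorithm for the total spectral efficiency
maximization problem in cell-free massive MIMO: if `L` is a Lipschitz constant of `∇f`
and `0 < α < 1/L`, the APG iterates are bounded and every accumulation point is a
critical point of `max {f(μ) : μ ∈ S}`. -/
theorem stmt_13 (M K N : ℕ) (hM : 0 < M) (hK : 0 < K) (hN : 0 < N)
    (ζd : ℝ) (hζd : 0 < ζd) (ϑ : ℝ) (hϑ : 0 < ϑ)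
    (ν : Fin K → Fin K → Fin M → ℝ)
    (β : Fin M → Fin K → ℝ) (hβ : ∀ m i, 0 < β m i)
    (L : ℝ) (hL : 0 < L) (α : ℝ) (hα0 : 0 < α) (hα1 : α < 1 / L)
    (t : ℕ → ℝ) (ht0 : t 0 = 1) (ht1 : t 1 = 1)
    (ht : ∀ n, 1 ≤ n → t (n + 1) = (Real.sqrt (4 * t n ^ 2 + 1) + 1) / 2)
    (μ y z v : ℕ → EuclideanSpace ℝ (Fin M × Fin K)) :
    let b : Fin K → EuclideanSpace ℝ (Fin M × Fin K) → ℝ := fun k μ =>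
      ζd * (∑ m : Fin M, ν k k m * μ (m, k)) ^ 2
    let c : Fin K → EuclideanSpace ℝ (Fin M × Fin K) → ℝ := fun k μ =>
      ζd * ((∑ i ∈ Finset.univ.erase k, (∑ m : Fin M, ν i k m * μ (m, i)) ^ 2)
        + (1 / (N : ℝ)) * ∑ i : Fin K, ∑ m : Fin M, β m i * (μ (m, i)) ^ 2)
        + 1 / (N : ℝ) ^ 2
    let SE : Fin K → EuclideanSpace ℝ (Fin M × Fin K) → ℝ := fun k μ =>
      ϑ * (Real.log (b k μ + c k μ) - Real.log (c k μ))
    let f : EuclideanSpace ℝ (Fin M × Fin K) → ℝ := fun μ => ∑ k : Fin K, SE k μ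
    let S : Set (EuclideanSpace ℝ (Fin M × Fin K)) :=
      {μ | (∀ p, 0 ≤ μ p) ∧ ∀ m : Fin M, ∑ k : Fin K, (μ (m, k)) ^ 2 ≤ 1 / (N : ℝ)}
    -- `L` is a Lipschitz constant of `∇f`
    (∀ x₁ x₂ : EuclideanSpace ℝ (Fin M × Fin K),
      ‖gradient f x₁ - gradient f x₂‖ ≤ L * ‖x₁ - x₂‖) →
    -- initialization: μ⁰ = μ¹ = z¹ ∈ S
    μ 0 = μ 1 → μ 1 = z 1 → μ 1 ∈ S →
    -- extrapolation step
    (∀ n, 1 ≤ n → y n = μ n + (t (n - 1) / t n) • (z n - μ n)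
      + ((t (n - 1) - 1) / t n) • (μ n - μ (n - 1))) →
    -- zⁿ⁺¹ = P_S(yⁿ + α ∇f(yⁿ))
    (∀ n, 1 ≤ n → z (n + 1) ∈ S ∧
      ∀ w ∈ S, ‖z (n + 1) - (y n + α • gradient f (y n))‖ ≤
        ‖w - (y n + α • gradient f (y n))‖) →
    -- vⁿ⁺¹ = P_S(μⁿ + α ∇f(μⁿ))
    (∀ n, 1 ≤ n → v (n + 1) ∈ S ∧
      ∀ w ∈ S, ‖v (n + 1) - (μ n + α • gradient f (μ n))‖ ≤
        ‖w - (μ n + α • gradient f (μ n))‖) →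
    -- monotone update
    (∀ n, 1 ≤ n →
      μ (n + 1) = if f (z (n + 1)) ≥ f (v (n + 1)) then z (n + 1) else v (n + 1)) →
    (∃ C : ℝ, ∀ n, ‖μ n‖ ≤ C) ∧
    ∀ μstar : EuclideanSpace ℝ (Fin M × Fin K),
      (∃ φ : ℕ → ℕ, StrictMono φ ∧
        Filter.Tendsto (fun j => μ (φ j)) Filter.atTop (nhds μstar)) →
      ∀ w ∈ S, ⟪gradient f μstar, w - μstar⟫ ≤ 0 := by
  intro b c SE f S hLip hμ01 hμ1z hμ1S hy hz hv hupd
  have hNpos : (0:ℝ) < (N:ℝ) := by exact_mod_cast hN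
  -- positivity facts
  have hbnn : ∀ k x, 0 ≤ b k x := fun k x => mul_nonneg hζd.le (sq_nonneg _)
  have hcpos : ∀ k x, 0 < c k x := by
    intro k x
    have h1 : 0 ≤ (∑ i ∈ Finset.univ.erase k, (∑ m : Fin M, ν i k m * x (m, i)) ^ 2) :=
      Finset.sum_nonneg fun _ _ => sq_nonneg _
    have h2 : 0 ≤ ∑ i : Fin K, ∑ m : Fin M, β m i * (x (m, i)) ^ 2 :=
      Finset.sum_nonneg fun i _ =>
        Finset.sum_nonneg fun m _ => mul_nonneg (hβ m i).le (sq_nonneg _)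
    have h3 : (0:ℝ) < 1 / (N:ℝ)^2 := by positivity
    have h4 : (0:ℝ) ≤ ζd * ((∑ i ∈ Finset.univ.erase k,
        (∑ m : Fin M, ν i k m * x (m, i)) ^ 2)
        + (1 / (N : ℝ)) * ∑ i : Fin K, ∑ m : Fin M, β m i * (x (m, i)) ^ 2) :=
      mul_nonneg hζd.le (add_nonneg h1 (mul_nonneg (by positivity) h2))
    simp only [c]
    linarith
  -- differentiability of f
  have hcoord : ∀ p : Fin M × Fin K,
      Differentiable ℝ (fun x : EuclideanSpace ℝ (Fin M × Fin K) => x p) :=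
    fun p => (EuclideanSpace.proj (𝕜 := ℝ) p).differentiable
  have hbd : ∀ k, Differentiable ℝ (b k) := by
    intro k
    simp only [b]
    exact ((Differentiable.fun_sum fun m _ =>
      (hcoord (m, k)).const_mul (ν k k m)).pow 2).const_mul ζd
  have hcd : ∀ k, Differentiable ℝ (c k) := by
    intro k
    simp only [c]
    have hA : Differentiable ℝ (fun x : EuclideanSpace ℝ (Fin M × Fin K) =>
        ∑ i ∈ Finset.univ.erase k, (∑ m : Fin M, ν i k m * x (m, i)) ^ 2) :=
      Differentiable.fun_sum fun i _ =>
        (Differentiable.fun_sum fun m _ => (hcoord (m, i)).const_mul (ν i k m)).pow 2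
    have hB : Differentiable ℝ (fun x : EuclideanSpace ℝ (Fin M × Fin K) =>
        ∑ i : Fin K, ∑ m : Fin M, β m i * (x (m, i)) ^ 2) :=
      Differentiable.fun_sum fun i _ =>
        Differentiable.fun_sum fun m _ => ((hcoord (m, i)).pow 2).const_mul (β m i)
    exact ((hA.add (hB.const_mul _)).const_mul ζd).add_const _
  have hfd : Differentiable ℝ f := by
    simp only [f, SE]
    apply Differentiable.fun_sum
    intro k _
    exact ((((hbd k).add (hcd k)).log fun x =>
      (add_pos_of_nonneg_of_pos (hbnn k x) (hcpos k x)).ne').sub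
      ((hcd k).log fun x => (hcpos k x).ne')).const_mul ϑ
  -- convexity of S
  have hSconv : Convex ℝ S := by
    intro a haS a' ha'S p q hp hq hpq
    obtain ⟨ha1, ha2⟩ := haS
    obtain ⟨ha'1, ha'2⟩ := ha'S
    have happ : ∀ pt, (p • a + q • a') pt = p * a pt + q * a' pt := by
      intro pt; simp [PiLp.add_apply, PiLp.smul_apply, smul_eq_mul]
    constructor
    · intro pt
      rw [happ pt]
      exact add_nonneg (mul_nonneg hp (ha1 pt)) (mul_nonneg hq (ha'1 pt))
    · intro m
      calc ∑ k : Fin K, ((p • a + q • a') (m, k)) ^ 2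
          ≤ ∑ k : Fin K, (p * (a (m, k))^2 + q * (a' (m, k))^2) := by
            apply Finset.sum_le_sum
            intro k _
            rw [happ (m, k)]
            nlinarith [mul_nonneg (mul_nonneg hp hq) (sq_nonneg (a (m,k) - a' (m,k)))]
        _ = p * (∑ k : Fin K, (a (m, k))^2) + q * (∑ k : Fin K, (a' (m, k))^2) := by
            rw [Finset.sum_add_distrib, Finset.mul_sum, Finset.mul_sum]
        _ ≤ p * (1 / (N:ℝ)) + q * (1 / (N:ℝ)) :=
            add_le_add (mul_le_mul_of_nonneg_left (ha2 m) hp)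
              (mul_le_mul_of_nonneg_left (ha'2 m) hq)
        _ = 1 / (N:ℝ) := by rw [← add_mul, hpq, one_mul]
  -- boundedness of S
  have hSbnd : ∀ x ∈ S, ‖x‖ ≤ Real.sqrt ((M:ℝ) / N) := by
    intro x hx
    rw [EuclideanSpace.norm_eq]
    apply Real.sqrt_le_sqrt
    calc ∑ p : Fin M × Fin K, ‖x p‖^2
        = ∑ m : Fin M, ∑ k : Fin K, (x (m, k))^2 := by
          rw [Fintype.sum_prod_type]; simp [Real.norm_eq_abs, sq_abs]
      _ ≤ ∑ _m : Fin M, 1/(N:ℝ) := Finset.sum_le_sum fun m _ => hx.2 m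
      _ = (M:ℝ) / N := by
          rw [Finset.sum_const, Finset.card_univ, Fintype.card_fin, nsmul_eq_mul]
          ring
  -- all iterates lie in S
  have hμS : ∀ n, μ n ∈ S := by
    have hsucc : ∀ n, μ (n + 1) ∈ S := by
      intro n
      induction n with
      | zero => exact hμ1S
      | succ m _ =>
        rw [hupd (m + 1) (Nat.le_add_left 1 m)]
        split_ifs
        · exact (hz (m + 1) (Nat.le_add_left 1 m)).1
        · exact (hv (m + 1) (Nat.le_add_left 1 m)).1
    intro n
    cases n with
    | zero => rw [hμ01]; exact hμ1S
    | succ m => exact hsucc m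
  refine ⟨⟨Real.sqrt ((M:ℝ) / N), fun n => hSbnd _ (hμS n)⟩, ?_⟩
  -- accumulation points are critical
  rintro μstar ⟨φ, hφmono, hφtend⟩ w hwS
  -- compactness, maximum of f on S
  have hSclosed : IsClosed S := by
    have hrepr : S = (⋂ p, {x : EuclideanSpace ℝ (Fin M × Fin K) | 0 ≤ x p}) ∩
        ⋂ m : Fin M, {x : EuclideanSpace ℝ (Fin M × Fin K) |
          ∑ k : Fin K, (x (m, k))^2 ≤ 1/(N:ℝ)} := by
      ext x
      simp only [S, Set.mem_setOf_eq, Set.mem_inter_iff, Set.mem_iInter]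
    rw [hrepr]
    exact IsClosed.inter
      (isClosed_iInter fun p =>
        isClosed_le continuous_const (EuclideanSpace.proj p).continuous)
      (isClosed_iInter fun m =>
        isClosed_le (continuous_finset_sum _ fun k _ =>
          ((EuclideanSpace.proj ((m, k) : Fin M × Fin K)).continuous.pow 2))
          continuous_const)
  have hScompact : IsCompact S :=
    Metric.isCompact_of_isClosed_isBounded hSclosed
      (isBounded_iff_forall_norm_le.mpr ⟨_, hSbnd⟩)
  obtain ⟨w0, hw0S, hw0max⟩ :=
    hScompact.exists_isMaxOn ⟨μ 1, hμ1S⟩ hfd.continuous.continuousOn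
  set δ : ℝ := 1/α - L with hδdef
  have hδ : 0 < δ := by
    have hαL : α * L < 1 := (lt_div_iff₀ hL).mp hα1
    have hLα : L < 1/α := by rw [lt_div_iff₀ hα0]; linarith
    simp only [hδdef]; linarith
  -- key sufficient-decrease inequality
  have hkey : ∀ n, 1 ≤ n → f (μ n) + δ * ‖v (n+1) - μ n‖^2 ≤ f (μ (n+1)) := by
    intro n hn
    obtain ⟨hvS, hvmin⟩ := hv n hn
    have hVI := my_proj_vi hSconv hvS hvmin (μ n) (hμS n)
    have hexp : ⟪μ n + α • gradient f (μ n) - v (n+1), μ n - v (n+1)⟫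
        = ‖μ n - v (n+1)‖^2 + α * ⟪gradient f (μ n), μ n - v (n+1)⟫ := by
      rw [show μ n + α • gradient f (μ n) - v (n+1)
          = (μ n - v (n+1)) + α • gradient f (μ n) by module]
      rw [inner_add_left, real_inner_smul_left, real_inner_self_eq_norm_sq]
    have hflip : ⟪gradient f (μ n), v (n+1) - μ n⟫
        = -⟪gradient f (μ n), μ n - v (n+1)⟫ := by
      rw [← inner_neg_right, neg_sub]
    have hstep : ‖v (n+1) - μ n‖^2 ≤ α * ⟪gradient f (μ n), v (n+1) - μ n⟫ := by
      rw [norm_sub_rev, hflip]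
      rw [hexp] at hVI
      linarith
    have hdes := my_descent f hfd L hL.le hLip (μ n) (v (n+1))
    have hge : f (v (n+1)) ≤ f (μ (n+1)) := by
      rw [hupd n hn]
      split_ifs with h
      · exact h
      · exact le_refl _
    have hinv : (1/α) * ‖v (n+1) - μ n‖^2 ≤ ⟪gradient f (μ n), v (n+1) - μ n⟫ := by
      rw [one_div, inv_mul_le_iff₀ hα0]
      exact hstep
    have h3 : δ * ‖v (n+1) - μ n‖^2
        ≤ ⟪gradient f (μ n), v (n+1) - μ n⟫ - L * ‖v (n+1) - μ n‖^2 := by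
      simp only [hδdef, sub_mul]
      linarith
    linarith
  -- f (μ (n+1)) is monotone and bounded above, hence converges
  set a : ℕ → ℝ := fun n => f (μ (n+1)) with hadef
  have hamono : Monotone a := by
    apply monotone_nat_of_le_succ
    intro n
    have h := hkey (n+1) (Nat.le_add_left 1 n)
    have h0 : 0 ≤ δ * ‖v (n+2) - μ (n+1)‖^2 := mul_nonneg hδ.le (sq_nonneg _)
    simp only [hadef]
    linarith
  have habdd : BddAbove (Set.range a) := by
    refine ⟨f w0, ?_⟩
    rintro _ ⟨n, rfl⟩
    exact hw0max (hμS (n+1))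
  have halim : Filter.Tendsto a Filter.atTop (nhds (⨆ n, a n)) :=
    tendsto_atTop_ciSup hamono habdd
  have hfa1 : Filter.Tendsto (fun n => f (μ (n+1))) Filter.atTop (nhds (⨆ n, a n)) := halim
  have hfa : Filter.Tendsto (fun n => f (μ n)) Filter.atTop (nhds (⨆ n, a n)) := by
    have hshift : Filter.Tendsto (fun n : ℕ => a (n - 1)) Filter.atTop (nhds (⨆ n, a n)) :=
      halim.comp (Filter.tendsto_sub_atTop_nat 1)
    apply hshift.congr'
    filter_upwards [Filter.eventually_ge_atTop 1] with n hn
    simp only [hadef]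
    rw [Nat.sub_add_cancel hn]
  have hdiff0 : Filter.Tendsto (fun n => f (μ (n+1)) - f (μ n)) Filter.atTop (nhds 0) := by
    simpa using hfa1.sub hfa
  have hsq0 : Filter.Tendsto (fun n => ‖v (n+1) - μ n‖^2) Filter.atTop (nhds 0) := by
    have hg0 : Filter.Tendsto (fun n => (f (μ (n+1)) - f (μ n)) / δ) Filter.atTop (nhds 0) := by
      simpa using hdiff0.div_const δ
    apply squeeze_zero' (Filter.Eventually.of_forall fun n => sq_nonneg _) ?_ hg0
    filter_upwards [Filter.eventually_ge_atTop 1] with n hn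
    rw [le_div_iff₀ hδ]
    have h := hkey n hn
    nlinarith
  have hnorm0 : Filter.Tendsto (fun n => ‖v (n+1) - μ n‖) Filter.atTop (nhds 0) := by
    have hsqrt := (Real.continuous_sqrt.tendsto 0).comp hsq0
    simp only [Function.comp_def, Real.sqrt_zero] at hsqrt
    refine hsqrt.congr fun n => ?_
    exact Real.sqrt_sq (norm_nonneg _)
  have hvec0 : Filter.Tendsto (fun n => v (n+1) - μ n) Filter.atTop (nhds 0) :=
    tendsto_zero_iff_norm_tendsto_zero.mpr hnorm0
  have hφtop : Filter.Tendsto φ Filter.atTop Filter.atTop := hφmono.tendsto_atTop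
  have hvtend : Filter.Tendsto (fun j => v (φ j + 1)) Filter.atTop (nhds μstar) := by
    have h := hφtend.add (hvec0.comp hφtop)
    rw [add_zero] at h
    simp only [Function.comp_def] at h
    refine h.congr fun j => ?_
    abel
  have hgradtend : Filter.Tendsto (fun j => gradient f (μ (φ j))) Filter.atTop
      (nhds (gradient f μstar)) := by
    rw [tendsto_iff_norm_sub_tendsto_zero]
    have hb : Filter.Tendsto (fun j => L * ‖μ (φ j) - μstar‖) Filter.atTop (nhds 0) := by
      have h := tendsto_iff_norm_sub_tendsto_zero.mp hφtend
      simpa using h.const_mul L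
    exact squeeze_zero (fun j => norm_nonneg _) (fun j => hLip _ _) hb
  have hiptend : Filter.Tendsto (fun j =>
      ⟪μ (φ j) + α • gradient f (μ (φ j)) - v (φ j + 1), w - v (φ j + 1)⟫)
      Filter.atTop (nhds ⟪α • gradient f μstar, w - μstar⟫) := by
    have h1 : Filter.Tendsto (fun j => μ (φ j) + α • gradient f (μ (φ j)) - v (φ j + 1))
        Filter.atTop (nhds (α • gradient f μstar)) := by
      have h := (hφtend.add (hgradtend.const_smul α)).sub hvtend
      simpa using h
    have h2 : Filter.Tendsto (fun j => w - v (φ j + 1)) Filter.atTop (nhds (w - μstar)) :=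
      tendsto_const_nhds.sub hvtend
    exact h1.inner h2
  have hfinal : ⟪α • gradient f μstar, w - μstar⟫ ≤ 0 := by
    apply le_of_tendsto hiptend
    filter_upwards [Filter.eventually_ge_atTop 1] with j hj
    have hφj : 1 ≤ φ j := le_trans hj hφmono.le_apply
    obtain ⟨hvS, hvmin⟩ := hv (φ j) hφj
    exact my_proj_vi hSconv hvS hvmin w hwS
  rw [real_inner_smul_left] at hfinal
  nlinarith [hfinal, hα0]
end

section
/- Fix positive integers M, K, N, constants ζ_d > 0, ϑ > 0 and τ > 0, vectors ν̄_{ik} ∈ ℝ^M for i, k ∈ {1,…,K}, and positive coefficients β_{mi} > 0. Let f_τ(μ) = −(1/τ)·log((1/K)·∑_{k=1}^K exp(−τ·SE_k(μ))) be the log-sum-exp smoothing of the minimum user spectral efficiency on ℝ^{MK}, let S = {μ ∈ ℝ^{MK} : μ ≥ 0 componentwise and ∑_{k=1}^K μ_{mk}² ≤ 1/N for each m} be the feasible set, and suppose L > 0 is a Lipschitz constant of ∇f_τ. If 0 < α < 1/L, then the iterates (μⁿ) generated by the monotone APG algorithm applied to f_τ (with t₀ = t₁ = 1, tₙ₊₁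 = (√(4tₙ² + 1) + 1)/2, extrapolation yⁿ = μⁿ + (tₙ₋₁/tₙ)(zⁿ − μⁿ) + ((tₙ₋₁ − 1)/tₙ)(μⁿ − μⁿ⁻¹), projected steps zⁿ⁺¹ = P_S(yⁿ + α∇f_τ(yⁿ)) and vⁿ⁺¹ = P_S(μⁿ + α∇f_τ(μⁿ)), and μⁿ⁺¹ chosen as zⁿ⁺¹ if f_τ(zⁿ⁺¹) ≥ f_τ(vⁿ⁺¹) and vⁿ⁺¹ otherwise, starting from μ⁰ = μ¹ = z¹ ∈ S) are bounded, and every accumulation point μ* of (μⁿ) satisfies ⟨∇f_τ(μ*), z − μ*⟩ ≤ 0 for all z ∈ S, i.e. μ* is a critical point of maximizing the smoothed minimum spectral efficiency over S. -/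
open scoped BigOperators RealInnerProductSpace

section Aux
variable {E : Type*} [NormedAddCommGroup E] [InnerProductSpace ℝ E] [CompleteSpace E]

lemma apg_line_deriv (f : E → ℝ) (hf : Differentiable ℝ f) (x d : E) (s : ℝ) :
    HasDerivAt (fun r : ℝ => f (x + r • d)) ⟪gradient f (x + s • d), d⟫ s := by
  have h1 : HasDerivAt (fun r : ℝ => x + r • d) d s := by
    simpa using ((hasDerivAt_id s).smul_const d).const_add x
  have h3 := (hf (x + s • d)).hasGradientAt.hasFDerivAt
  have h4 := h3.comp_hasDerivAt s h1
  simpa [InnerProductSpace.toDual_apply_apply, Function.comp_def] using h4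

lemma apg_descent (f : E → ℝ) (hf : Differentiable ℝ f) (L : ℝ) (hL : 0 ≤ L)
    (hLip : ∀ x₁ x₂ : E, ‖gradient f x₁ - gradient f x₂‖ ≤ L * ‖x₁ - x₂‖)
    (x v : E) :
    f x + ⟪gradient f x, v - x⟫ - L / 2 * ‖v - x‖ ^ 2 ≤ f v := by
  set d := v - x with hd
  have hgc : Continuous (gradient f) := by
    refine (LipschitzWith.of_dist_le_mul (K := ⟨L, hL⟩) ?_).continuous
    intro a b; rw [dist_eq_norm, dist_eq_norm]; exact hLip a b
  have hline : Continuous fun s : ℝ => x + s • d := by continuity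
  have hcont : Continuous fun s : ℝ => ⟪gradient f (x + s • d), d⟫ :=
    Continuous.inner (hgc.comp hline) continuous_const
  have hftc : ∫ s in (0:ℝ)..1, ⟪gradient f (x + s • d), d⟫
      = f (x + (1:ℝ) • d) - f (x + (0:ℝ) • d) :=
    intervalIntegral.integral_eq_sub_of_hasDerivAt
      (fun s _ => apg_line_deriv f hf x d s) (hcont.intervalIntegrable 0 1)
  have hpt : ∀ s ∈ Set.Icc (0:ℝ) 1,
      ⟪gradient f x, d⟫ - L * ‖d‖ ^ 2 * s ≤ ⟪gradient f (x + s • d), d⟫ := by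
    intro s hs
    have h1 : ⟪gradient f x, d⟫ - ⟪gradient f (x + s • d), d⟫
        = ⟪gradient f x - gradient f (x + s • d), d⟫ := (inner_sub_left _ _ _).symm
    have h2 : ⟪gradient f x - gradient f (x + s • d), d⟫
        ≤ ‖gradient f x - gradient f (x + s • d)‖ * ‖d‖ := real_inner_le_norm _ _
    have h3 : ‖gradient f x - gradient f (x + s • d)‖ ≤ L * (s * ‖d‖) := by
      have h := hLip x (x + s • d)
      have : x - (x + s • d) = -(s • d) := by abel
      rw [this, norm_neg, norm_smul, Real.norm_eq_abs, abs_of_nonneg hs.1] at h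
      exact h
    have h4 : ‖gradient f x - gradient f (x + s • d)‖ * ‖d‖ ≤ (L * (s * ‖d‖)) * ‖d‖ :=
      mul_le_mul_of_nonneg_right h3 (norm_nonneg d)
    have h5 : (L * (s * ‖d‖)) * ‖d‖ = L * ‖d‖ ^ 2 * s := by ring
    linarith [h1 ▸ (h2.trans (h4.trans_eq h5))]
  have hint : ∫ s in (0:ℝ)..1, (⟪gradient f x, d⟫ - L * ‖d‖ ^ 2 * s)
      ≤ ∫ s in (0:ℝ)..1, ⟪gradient f (x + s • d), d⟫ := by
    refine intervalIntegral.integral_mono_on (by norm_num) ?_ (hcont.intervalIntegrable 0 1) hpt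
    exact (by continuity : Continuous fun s : ℝ => ⟪gradient f x, d⟫ - L * ‖d‖ ^ 2 * s).intervalIntegrable 0 1
  have hval : ∫ s in (0:ℝ)..1, (⟪gradient f x, d⟫ - L * ‖d‖ ^ 2 * s)
      = ⟪gradient f x, d⟫ - L * ‖d‖ ^ 2 / 2 := by
    have h7 : ∫ s in (0:ℝ)..1, (L * ‖d‖ ^ 2 * s) = L * ‖d‖ ^ 2 * ∫ s in (0:ℝ)..1, s :=
      intervalIntegral.integral_const_mul _ _
    have hInt2 : IntervalIntegrable (fun s : ℝ => L * ‖d‖ ^ 2 * s) MeasureTheory.volume 0 1 :=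
      (by continuity : Continuous fun s : ℝ => L * ‖d‖ ^ 2 * s).intervalIntegrable 0 1
    rw [intervalIntegral.integral_sub intervalIntegrable_const hInt2,
      h7, integral_id, intervalIntegral.integral_const]
    norm_num
    ring
  have hfin : f (x + (1:ℝ) • d) = f v := by rw [hd]; congr 1; simp
  have hfin0 : f (x + (0:ℝ) • d) = f x := by congr 1; simp
  rw [hfin, hfin0] at hftc
  rw [hval] at hint
  rw [hftc] at hint
  linarith

end Aux

set_option maxHeartbeats 1600000 in
/-- Convergence of the monotone APG algorithm for the smoothed max-min fairness problem
in cell-free massive MIMO: applying APG to the log-sum-exp smoothing `f_τ` of the minimum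
user spectral efficiency, with `L` a Lipschitz constant of `∇f_τ` and `0 < α < 1/L`, the
iterates are bounded and every accumulation point is a critical point of
`max {f_τ(μ) : μ ∈ S}`. -/
theorem stmt_14 (M K N : ℕ) (hM : 0 < M) (hK : 0 < K) (hN : 0 < N)
    (ζd : ℝ) (hζd : 0 < ζd) (ϑ : ℝ) (hϑ : 0 < ϑ) (τ : ℝ) (hτ : 0 < τ)
    (ν : Fin K → Fin K → Fin M → ℝ)
    (β : Fin M → Fin K → ℝ) (hβ : ∀ m i, 0 < β m i)
    (L : ℝ) (hL : 0 < L) (α : ℝ) (hα0 : 0 < α) (hα1 : α < 1 / L)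
    (t : ℕ → ℝ) (ht0 : t 0 = 1) (ht1 : t 1 = 1)
    (ht : ∀ n, 1 ≤ n → t (n + 1) = (Real.sqrt (4 * t n ^ 2 + 1) + 1) / 2)
    (μ y z v : ℕ → EuclideanSpace ℝ (Fin M × Fin K)) :
    let b : Fin K → EuclideanSpace ℝ (Fin M × Fin K) → ℝ := fun k μ =>
      ζd * (∑ m : Fin M, ν k k m * μ (m, k)) ^ 2
    let c : Fin K → EuclideanSpace ℝ (Fin M × Fin K) → ℝ := fun k μ =>
      ζd * ((∑ i ∈ Finset.univ.erase k, (∑ m : Fin M, ν i k m * μ (m, i)) ^ 2)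
        + (1 / (N : ℝ)) * ∑ i : Fin K, ∑ m : Fin M, β m i * (μ (m, i)) ^ 2)
        + 1 / (N : ℝ) ^ 2
    let SE : Fin K → EuclideanSpace ℝ (Fin M × Fin K) → ℝ := fun k μ =>
      ϑ * (Real.log (b k μ + c k μ) - Real.log (c k μ))
    let fτ : EuclideanSpace ℝ (Fin M × Fin K) → ℝ := fun μ =>
      -(1 / τ) * Real.log ((1 / (K : ℝ)) * ∑ k : Fin K, Real.exp (-τ * SE k μ))
    let S : Set (EuclideanSpace ℝ (Fin M × Fin K)) :=
      {μ | (∀ p, 0 ≤ μ p) ∧ ∀ m : Fin M, ∑ k : Fin K, (μ (m, k)) ^ 2 ≤ 1 / (N : ℝ)}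
    -- `L` is a Lipschitz constant of `∇f_τ`
    (∀ x₁ x₂ : EuclideanSpace ℝ (Fin M × Fin K),
      ‖gradient fτ x₁ - gradient fτ x₂‖ ≤ L * ‖x₁ - x₂‖) →
    -- initialization: μ⁰ = μ¹ = z¹ ∈ S
    μ 0 = μ 1 → μ 1 = z 1 → μ 1 ∈ S →
    -- extrapolation step
    (∀ n, 1 ≤ n → y n = μ n + (t (n - 1) / t n) • (z n - μ n)
      + ((t (n - 1) - 1) / t n) • (μ n - μ (n - 1))) →
    -- zⁿ⁺¹ = P_S(yⁿ + α ∇f_τ(yⁿ))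
    (∀ n, 1 ≤ n → z (n + 1) ∈ S ∧
      ∀ w ∈ S, ‖z (n + 1) - (y n + α • gradient fτ (y n))‖ ≤
        ‖w - (y n + α • gradient fτ (y n))‖) →
    -- vⁿ⁺¹ = P_S(μⁿ + α ∇f_τ(μⁿ))
    (∀ n, 1 ≤ n → v (n + 1) ∈ S ∧
      ∀ w ∈ S, ‖v (n + 1) - (μ n + α • gradient fτ (μ n))‖ ≤
        ‖w - (μ n + α • gradient fτ (μ n))‖) →
    -- monotone update
    (∀ n, 1 ≤ n →
      μ (n + 1) = if fτ (z (n + 1)) ≥ fτ (v (n + 1)) then z (n + 1) else v (n + 1)) →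
    (∃ C : ℝ, ∀ n, ‖μ n‖ ≤ C) ∧
    ∀ μstar : EuclideanSpace ℝ (Fin M × Fin K),
      (∃ φ : ℕ → ℕ, StrictMono φ ∧
        Filter.Tendsto (fun j => μ (φ j)) Filter.atTop (nhds μstar)) →
      ∀ w ∈ S, ⟪gradient fτ μstar, w - μstar⟫ ≤ 0 := by
  intro b c SE fτ S hLip hμ01 hμ1z hμ1S hy hz hv hupd
  have hNpos : (0:ℝ) < N := by exact_mod_cast hN
  have hKpos : (0:ℝ) < K := by exact_mod_cast hK
  -- differentiability of fτ
  have hdcoord : ∀ p : Fin M × Fin K,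
      Differentiable ℝ (fun x : EuclideanSpace ℝ (Fin M × Fin K) => x p) :=
    fun p => (EuclideanSpace.proj (𝕜 := ℝ) p).differentiable
  have hdb : ∀ k, Differentiable ℝ (b k) := by
    intro k
    have h1 : Differentiable ℝ (fun x : EuclideanSpace ℝ (Fin M × Fin K) =>
        ∑ m : Fin M, ν k k m * x (m, k)) :=
      Differentiable.fun_sum fun m _ => (hdcoord (m, k)).const_mul (ν k k m)
    exact (h1.pow 2).const_mul ζd
  have hdc : ∀ k, Differentiable ℝ (c k) := by
    intro k
    have h1 : Differentiable ℝ (fun x : EuclideanSpace ℝ (Fin M × Fin K) =>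
        ∑ i ∈ Finset.univ.erase k, (∑ m : Fin M, ν i k m * x (m, i)) ^ 2) :=
      Differentiable.fun_sum fun i _ =>
        (Differentiable.fun_sum fun m _ => (hdcoord (m, i)).const_mul (ν i k m)).pow 2
    have h2 : Differentiable ℝ (fun x : EuclideanSpace ℝ (Fin M × Fin K) =>
        ∑ i : Fin K, ∑ m : Fin M, β m i * (x (m, i)) ^ 2) :=
      Differentiable.fun_sum fun i _ => Differentiable.fun_sum fun m _ =>
        ((hdcoord (m, i)).pow 2).const_mul (β m i)
    exact ((h1.add (h2.const_mul (1/(N:ℝ)))).const_mul ζd).add_const (1/(N:ℝ)^2)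
  have hcpos : ∀ k (x : EuclideanSpace ℝ (Fin M × Fin K)), 0 < c k x := by
    intro k x
    have h2 : 0 ≤ ∑ i : Fin K, ∑ m : Fin M, β m i * (x (m, i)) ^ 2 :=
      Finset.sum_nonneg fun i _ => Finset.sum_nonneg fun m _ =>
        mul_nonneg (hβ m i).le (sq_nonneg _)
    have h1 : 0 ≤ ζd * ((∑ i ∈ Finset.univ.erase k, (∑ m : Fin M, ν i k m * x (m, i)) ^ 2)
        + (1 / (N:ℝ)) * ∑ i : Fin K, ∑ m : Fin M, β m i * (x (m, i)) ^ 2) :=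
      mul_nonneg hζd.le (add_nonneg (Finset.sum_nonneg fun _ _ => sq_nonneg _)
        (mul_nonneg (one_div_nonneg.mpr hNpos.le) h2))
    have h3 : (0:ℝ) < 1 / (N:ℝ) ^ 2 := one_div_pos.mpr (pow_pos hNpos 2)
    exact add_pos_of_nonneg_of_pos h1 h3
  have hbnn : ∀ k (x : EuclideanSpace ℝ (Fin M × Fin K)), 0 ≤ b k x :=
    fun k x => mul_nonneg hζd.le (sq_nonneg _)
  have hbcpos : ∀ k (x : EuclideanSpace ℝ (Fin M × Fin K)), 0 < b k x + c k x :=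
    fun k x => add_pos_of_nonneg_of_pos (hbnn k x) (hcpos k x)
  have hdSE : ∀ k, Differentiable ℝ (SE k) := by
    intro k
    have h1 : Differentiable ℝ (fun x => Real.log (b k x + c k x)) :=
      Differentiable.log ((hdb k).add (hdc k)) fun x => (hbcpos k x).ne'
    have h2 : Differentiable ℝ (fun x => Real.log (c k x)) :=
      Differentiable.log (hdc k) fun x => (hcpos k x).ne'
    exact (h1.sub h2).const_mul ϑ
  have hsumpos : ∀ x : EuclideanSpace ℝ (Fin M × Fin K),
      0 < (1 / (K:ℝ)) * ∑ k : Fin K, Real.exp (-τ * SE k x) := by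
    intro x
    have h1 : 0 < ∑ k : Fin K, Real.exp (-τ * SE k x) :=
      Finset.sum_pos (fun k _ => Real.exp_pos _) ⟨⟨0, hK⟩, Finset.mem_univ _⟩
    exact mul_pos (one_div_pos.mpr hKpos) h1
  have hdiff : Differentiable ℝ fτ := by
    have h1 : Differentiable ℝ (fun x : EuclideanSpace ℝ (Fin M × Fin K) =>
        ∑ k : Fin K, Real.exp (-τ * SE k x)) :=
      Differentiable.fun_sum fun k _ => ((hdSE k).const_mul (-τ)).exp
    exact (Differentiable.log (h1.const_mul (1/(K:ℝ))) fun x => (hsumpos x).ne').const_mul (-(1/τ))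
  -- convexity of S
  have hSconv : Convex ℝ S := by
    intro p hp q hq a a' ha ha' hab
    refine ⟨fun r => ?_, fun m => ?_⟩
    · have h1 : (a • p + a' • q) r = a * p r + a' * q r := by
        simp [PiLp.add_apply, PiLp.smul_apply, smul_eq_mul]
      rw [h1]
      exact add_nonneg (mul_nonneg ha (hp.1 r)) (mul_nonneg ha' (hq.1 r))
    · have hco : ∀ k : Fin K, (a * p (m,k) + a' * q (m,k))^2
          ≤ a * (p (m,k))^2 + a' * (q (m,k))^2 := by
        intro k
        nlinarith [sq_nonneg (p (m,k) - q (m,k)), mul_nonneg ha ha']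
      calc ∑ k : Fin K, ((a • p + a' • q) (m, k))^2
          = ∑ k : Fin K, (a * p (m,k) + a' * q (m,k))^2 := by
            refine Finset.sum_congr rfl fun k _ => ?_
            simp [PiLp.add_apply, PiLp.smul_apply, smul_eq_mul]
        _ ≤ ∑ k : Fin K, (a * (p (m,k))^2 + a' * (q (m,k))^2) :=
            Finset.sum_le_sum fun k _ => hco k
        _ = a * (∑ k : Fin K, (p (m,k))^2) + a' * (∑ k : Fin K, (q (m,k))^2) := by
            rw [Finset.sum_add_distrib, Finset.mul_sum, Finset.mul_sum]
        _ ≤ a * (1/(N:ℝ)) + a' * (1/(N:ℝ)) :=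
            add_le_add (mul_le_mul_of_nonneg_left (hp.2 m) ha)
              (mul_le_mul_of_nonneg_left (hq.2 m) ha')
        _ = 1/(N:ℝ) := by rw [← add_mul, hab, one_mul]
  -- norm bound on S
  have hnormS : ∀ x ∈ S, ‖x‖ ≤ Real.sqrt ((M:ℝ) / N) := by
    intro x hx
    rw [EuclideanSpace.norm_eq]
    apply Real.sqrt_le_sqrt
    calc ∑ p : Fin M × Fin K, ‖x p‖^2
        = ∑ m : Fin M, ∑ k : Fin K, (x (m,k))^2 := by
          rw [Fintype.sum_prod_type]
          simp [Real.norm_eq_abs, sq_abs]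
      _ ≤ ∑ _m : Fin M, 1/(N:ℝ) := Finset.sum_le_sum fun m _ => hx.2 m
      _ = (M:ℝ)/N := by
          simp [Finset.sum_const, Finset.card_univ, nsmul_eq_mul, div_eq_mul_inv]
  -- iterates stay in S
  have hμS : ∀ n, μ n ∈ S := by
    intro n
    induction n with
    | zero => rw [hμ01]; exact hμ1S
    | succ n ih =>
      rcases Nat.eq_zero_or_pos n with h0 | h1
      · subst h0; exact hμ1S
      · rw [hupd n h1]
        split_ifs with h
        · exact (hz n h1).1
        · exact (hv n h1).1
  refine ⟨⟨Real.sqrt ((M:ℝ)/N), fun n => hnormS _ (hμS n)⟩, ?_⟩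
  -- closedness and compactness of S
  have hSclosed : IsClosed S := by
    have hset : S = (⋂ p, {x : EuclideanSpace ℝ (Fin M × Fin K) | 0 ≤ x p}) ∩
        ⋂ m : Fin M, {x : EuclideanSpace ℝ (Fin M × Fin K) |
          ∑ k : Fin K, (x (m,k))^2 ≤ 1/(N:ℝ)} := by
      ext x
      constructor
      · rintro ⟨h1, h2⟩
        exact ⟨Set.mem_iInter.2 h1, Set.mem_iInter.2 h2⟩
      · rintro ⟨h1, h2⟩
        exact ⟨fun p => Set.mem_iInter.1 h1 p, fun m => Set.mem_iInter.1 h2 m⟩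
    rw [hset]
    refine IsClosed.inter (isClosed_iInter fun p => ?_) (isClosed_iInter fun m => ?_)
    · exact isClosed_le continuous_const (EuclideanSpace.proj (𝕜 := ℝ) p).continuous
    · exact isClosed_le (continuous_finset_sum _ fun k _ =>
        ((EuclideanSpace.proj (𝕜 := ℝ) ((m,k) : Fin M × Fin K)).continuous.pow 2)) continuous_const
  have hScomp : IsCompact S :=
    Metric.isCompact_of_isClosed_isBounded hSclosed
      (isBounded_iff_forall_norm_le.mpr ⟨_, hnormS⟩)
  have hS0 : (0 : EuclideanSpace ℝ (Fin M × Fin K)) ∈ S := by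
    constructor
    · intro p
      simp
    · intro m
      have h1 : ∑ k : Fin K, ((0 : EuclideanSpace ℝ (Fin M × Fin K)) (m,k))^2 = 0 := by simp
      rw [h1]
      exact one_div_nonneg.mpr hNpos.le
  obtain ⟨x₀, hx₀S, hx₀⟩ := hScomp.exists_isMaxOn ⟨0, hS0⟩ hdiff.continuous.continuousOn
  -- second part
  rintro μstar ⟨φ, hφ, hφlim⟩ w hw
  -- variational inequality for the projection characterization
  have hVI : ∀ (u ps : EuclideanSpace ℝ (Fin M × Fin K)), ps ∈ S →
      (∀ w' ∈ S, ‖ps - u‖ ≤ ‖w' - u‖) → ∀ w' ∈ S, ⟪u - ps, w' - ps⟫ ≤ 0 := by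
    intro u ps hps hmin
    haveI : Nonempty S := ⟨⟨ps, hps⟩⟩
    refine (norm_eq_iInf_iff_real_inner_le_zero hSconv hps).mp ?_
    have hbdd0 : BddBelow (Set.range fun w' : S =>
        ‖u - (w' : EuclideanSpace ℝ (Fin M × Fin K))‖) := by
      refine ⟨0, ?_⟩
      rintro r ⟨i, rfl⟩
      exact norm_nonneg _
    refine le_antisymm (le_ciInf fun w' => ?_) (ciInf_le hbdd0 ⟨ps, hps⟩)
    rw [norm_sub_rev u ps, norm_sub_rev u w'.1]
    exact hmin w'.1 w'.2
  have hαL : α * L < 1 := (lt_div_iff₀ hL).mp hα1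
  have hLα : L < 1/α := by
    rw [lt_div_iff₀ hα0]
    linarith [mul_comm α L]
  have hδ : 0 < 1/α - L/2 := by linarith
  -- key descent step
  have hstep : ∀ n, 1 ≤ n →
      fτ (μ n) + (1/α - L/2) * ‖v (n+1) - μ n‖^2 ≤ fτ (μ (n+1)) := by
    intro n hn
    obtain ⟨hvS, hvmin⟩ := hv n hn
    have hvi := hVI (μ n + α • gradient fτ (μ n)) (v (n+1)) hvS hvmin (μ n) (hμS n)
    have hrw : μ n + α • gradient fτ (μ n) - v (n+1)
        = (μ n - v (n+1)) + α • gradient fτ (μ n) := by abel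
    rw [hrw, inner_add_left, real_inner_smul_left] at hvi
    have e1 : ⟪μ n - v (n+1), μ n - v (n+1)⟫ = ‖μ n - v (n+1)‖^2 :=
      real_inner_self_eq_norm_sq _
    have e2 : ⟪gradient fτ (μ n), μ n - v (n+1)⟫
        = -⟪gradient fτ (μ n), v (n+1) - μ n⟫ := by
      rw [← inner_neg_right, neg_sub]
    have e3 : ‖μ n - v (n+1)‖ = ‖v (n+1) - μ n‖ := norm_sub_rev _ _
    rw [e1, e2, e3] at hvi
    have hdesc := apg_descent fτ hdiff L hL.le hLip (μ n) (v (n+1))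
    have hμnext : fτ (v (n+1)) ≤ fτ (μ (n+1)) := by
      rw [hupd n hn]
      split_ifs with h
      · exact h
      · exact le_rfl
    have hii : ‖v (n+1) - μ n‖^2 ≤ α * ⟪gradient fτ (μ n), v (n+1) - μ n⟫ := by linarith
    have h1a : (1/α) * ‖v (n+1) - μ n‖^2 ≤ ⟪gradient fτ (μ n), v (n+1) - μ n⟫ := by
      rw [one_div, inv_mul_le_iff₀ hα0]
      exact hii
    have hexp : (1/α - L/2) * ‖v (n+1) - μ n‖^2
        = (1/α)*‖v (n+1) - μ n‖^2 - L/2 * ‖v (n+1) - μ n‖^2 := by ring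
    linarith
  -- the objective values along μ are monotone and bounded
  have hmono : Monotone (fun n => fτ (μ (n+1))) := by
    refine monotone_nat_of_le_succ fun n => ?_
    have h := hstep (n+1) (Nat.le_add_left 1 n)
    have h2 : 0 ≤ (1/α - L/2) * ‖v (n+1+1) - μ (n+1)‖^2 :=
      mul_nonneg hδ.le (sq_nonneg _)
    linarith
  have hbdd : BddAbove (Set.range (fun n => fτ (μ (n+1)))) :=
    ⟨fτ x₀, by rintro _ ⟨n, rfl⟩; exact hx₀ (hμS (n+1))⟩
  have hatend : Filter.Tendsto (fun n => fτ (μ (n+1))) Filter.atTop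
      (nhds (⨆ n, fτ (μ (n+1)))) := tendsto_atTop_ciSup hmono hbdd
  have hdiff0 : Filter.Tendsto (fun n => fτ (μ (n+1+1)) - fτ (μ (n+1)))
      Filter.atTop (nhds 0) := by
    have h1 : Filter.Tendsto (fun n => fτ (μ (n+1+1))) Filter.atTop
        (nhds (⨆ n, fτ (μ (n+1)))) :=
      hatend.comp (Filter.tendsto_add_atTop_nat 1)
    simpa using h1.sub hatend
  have hsq0 : Filter.Tendsto (fun n => ‖v (n+1+1) - μ (n+1)‖^2) Filter.atTop (nhds 0) := by
    refine squeeze_zero (g := fun n => (fτ (μ (n+1+1)) - fτ (μ (n+1))) / (1/α - L/2))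
      (fun n => sq_nonneg _) (fun n => ?_) ?_
    · rw [le_div_iff₀ hδ]
      have h := hstep (n+1) (Nat.le_add_left 1 n)
      have hc : ‖v (n+1+1) - μ (n+1)‖^2 * (1/α - L/2)
          = (1/α - L/2) * ‖v (n+1+1) - μ (n+1)‖^2 := mul_comm _ _
      linarith
    · simpa using hdiff0.div_const (1/α - L/2)
  have h1 : Filter.Tendsto (fun n => ‖v (n+1+1) - μ (n+1)‖) Filter.atTop (nhds 0) := by
    have h2 := (Real.continuous_sqrt.tendsto' 0 0 Real.sqrt_zero).comp hsq0
    simpa [Function.comp_def, Real.sqrt_sq_eq_abs, abs_norm] using h2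
  have hvto0 : Filter.Tendsto (fun n => ‖v (n+1) - μ n‖) Filter.atTop (nhds 0) :=
    (Filter.tendsto_add_atTop_iff_nat 1).mp h1
  have hφat : Filter.Tendsto φ Filter.atTop Filter.atTop := hφ.tendsto_atTop
  have hvφn : Filter.Tendsto (fun j => ‖v (φ j + 1) - μ (φ j)‖) Filter.atTop (nhds 0) :=
    hvto0.comp hφat
  have hvφd : Filter.Tendsto (fun j => v (φ j + 1) - μ (φ j)) Filter.atTop (nhds 0) :=
    tendsto_zero_iff_norm_tendsto_zero.mpr hvφn
  have hvφ : Filter.Tendsto (fun j => v (φ j + 1)) Filter.atTop (nhds μstar) := by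
    have h3 := hvφd.add hφlim
    simpa using h3
  have hgφ : Filter.Tendsto (fun j => gradient fτ (μ (φ j))) Filter.atTop
      (nhds (gradient fτ μstar)) := by
    have hsub : Filter.Tendsto (fun j => ‖gradient fτ (μ (φ j)) - gradient fτ μstar‖)
        Filter.atTop (nhds 0) := by
      refine squeeze_zero (fun j => norm_nonneg _) (fun j => hLip _ _) ?_
      have h4 : Filter.Tendsto (fun j => μ (φ j) - μstar) Filter.atTop (nhds 0) := by
        simpa using hφlim.sub (tendsto_const_nhds (x := μstar))
      have h5 := tendsto_zero_iff_norm_tendsto_zero.mp h4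
      simpa using h5.const_mul L
    have h6 := tendsto_zero_iff_norm_tendsto_zero.mpr hsub
    simpa using h6.add (tendsto_const_nhds (x := gradient fτ μstar))
  have huφ : Filter.Tendsto
      (fun j => (μ (φ j) + α • gradient fτ (μ (φ j))) - v (φ j + 1))
      Filter.atTop (nhds (α • gradient fτ μstar)) := by
    have h7 := (hφlim.add (hgφ.const_smul α)).sub hvφ
    simpa using h7
  have hwv : Filter.Tendsto (fun j => w - v (φ j + 1)) Filter.atTop (nhds (w - μstar)) :=
    tendsto_const_nhds.sub hvφ
  have hlim : Filter.Tendsto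
      (fun j => ⟪(μ (φ j) + α • gradient fτ (μ (φ j))) - v (φ j + 1), w - v (φ j + 1)⟫)
      Filter.atTop (nhds ⟪α • gradient fτ μstar, w - μstar⟫) := huφ.inner hwv
  have hle : ⟪α • gradient fτ μstar, w - μstar⟫ ≤ 0 := by
    refine le_of_tendsto hlim ?_
    filter_upwards [Filter.eventually_ge_atTop 1] with j hj
    have hφj : 1 ≤ φ j := le_trans hj hφ.le_apply
    obtain ⟨hvS, hvmin⟩ := hv (φ j) hφj
    exact hVI _ _ hvS hvmin w hw
  rw [real_inner_smul_left] at hle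
  have h0 : α * ⟪gradient fτ μstar, w - μstar⟫ ≤ α * 0 := by
    rw [mul_zero]; exact hle
  exact le_of_mul_le_mul_left h0 hα0
end
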